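/- arXiv:2402.00408 — 11 statements merged into one kernel-verified Lean document; each statement's English description precedes it below -/
import Mathlib

section
/- Let α < β, let x : ℝ → ℝ be differentiable on (α,β) with ẋ(t) = deriv x t nonzero on (α,β), let w, v : ℝ → ℝ be differentiable on (α,β), let p, q, r : ℝ → ℝ and λ ∈ ℝ. Suppose u : ℝ → ℝ satisfies u(x(t)) = w(t)·v(t) for all t ∈ (α,β), u is differentiable with y ↦ p(y)·u'(y) differentiable on x((α,β)), the functions t ↦ (p(x(t))/ẋ(t))·w'(t) and t ↦ (p(x(t))·w(t)²/ẋ(t))·v'(t) are differentiable on (α,β), and −(d/dy)(p(y)·u'(y)) + q(y)·u(y) = λ·r(y)·u(y) for all y ∈ x((α,β)). Then for every t ∈ (α,β): −deriv (s ↦ P(s)·v'(s)) t + Q(t)·v(t) = λ·R(t)·v(t), where P(t) = p(x(t))·w(t)²/ẋ(t), Q(t) = [q(x(t))·w(t) − (1/ẋ(t))·deriv (s ↦ (p(x(s))/ẋ(s))·w'(s)) t]·w(t)·ẋ(t), and R(t) = r(x(t))·w(t)²·ẋ(t). -/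
/-- transforming both the independent variable `x = x(t)` and the
dependent variable `u = w·v` simultaneously gives the Sturm–Liouville form
`−(P·v')' + Q·v = λ·R·v` with
`P = p·w²/ẋ`, `Q = (q·w − (1/ẋ)·((p/ẋ)·w')')·w·ẋ`, `R = r·w²·ẋ`. -/
theorem stmt3 (α β : ℝ) (hαβ : α < β) (x w v : ℝ → ℝ)
    (hx : ∀ t ∈ Set.Ioo α β, DifferentiableAt ℝ x t)
    (hx' : ∀ t ∈ Set.Ioo α β, deriv x t ≠ 0)
    (hw : ∀ t ∈ Set.Ioo α β, DifferentiableAt ℝ w t)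
    (hv : ∀ t ∈ Set.Ioo α β, DifferentiableAt ℝ v t)
    (p q r : ℝ → ℝ) (lam : ℝ) (u : ℝ → ℝ)
    (huv : ∀ t ∈ Set.Ioo α β, u (x t) = w t * v t)
    (hu : ∀ y ∈ x '' Set.Ioo α β, DifferentiableAt ℝ u y)
    (hpu : ∀ y ∈ x '' Set.Ioo α β,
      DifferentiableAt ℝ (fun z => p z * deriv u z) y)
    (h1 : ∀ t ∈ Set.Ioo α β,
      DifferentiableAt ℝ (fun s => (p (x s) / deriv x s) * deriv w s) t)
    (h2 : ∀ t ∈ Set.Ioo α β,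
      DifferentiableAt ℝ (fun s => (p (x s) * w s ^ 2 / deriv x s) * deriv v s) t)
    (heq : ∀ y ∈ x '' Set.Ioo α β,
      -deriv (fun z => p z * deriv u z) y + q y * u y = lam * r y * u y) :
    ∀ t ∈ Set.Ioo α β,
      -deriv (fun s => (p (x s) * w s ^ 2 / deriv x s) * deriv v s) t
          + ((q (x t) * w t
              - (1 / deriv x t)
                  * deriv (fun s => (p (x s) / deriv x s) * deriv w s) t)
              * w t * deriv x t) * v t
        = lam * (r (x t) * w t ^ 2 * deriv x t) * v t := by
  intro t ht
  have hopen : Set.Ioo α β ∈ nhds t := isOpen_Ioo.mem_nhds ht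
  have key : ∀ s ∈ Set.Ioo α β,
      deriv u (x s) * deriv x s = deriv w s * v s + w s * deriv v s := by
    intro s hs
    have hcomp : deriv (fun τ => u (x τ)) s = deriv u (x s) * deriv x s := by
      have := deriv_comp s (hu (x s) ⟨s, hs, rfl⟩) (hx s hs)
      simpa [Function.comp_def] using this
    have hev : (fun τ => u (x τ)) =ᶠ[nhds s] fun τ => w τ * v τ :=
      Filter.eventually_of_mem (isOpen_Ioo.mem_nhds hs) huv
    have hde := hev.deriv_eq
    rw [hcomp] at hde
    rw [hde, deriv_fun_mul (hw s hs) (hv s hs)]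
  have hdu : ∀ s ∈ Set.Ioo α β,
      deriv u (x s) = (deriv w s * v s + w s * deriv v s) / deriv x s := by
    intro s hs
    rw [eq_div_iff (hx' s hs)]
    exact key s hs
  have hWCev : (fun s => w s * (p (x s) * deriv u (x s)))
      =ᶠ[nhds t] (fun s => ((p (x s) / deriv x s) * deriv w s) * (w s * v s)
        + (p (x s) * w s ^ 2 / deriv x s) * deriv v s) := by
    filter_upwards [hopen] with s hs
    rw [hdu s hs]
    have hX := hx' s hs
    field_simp
  have hCdiff : DifferentiableAt ℝ (fun s => p (x s) * deriv u (x s)) t := by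
    have := (hpu (x t) ⟨t, ht, rfl⟩).comp t (hx t ht)
    simpa [Function.comp_def] using this
  have hmain := hWCev.deriv_eq
  rw [deriv_fun_mul (hw t ht) hCdiff,
      deriv_fun_add ((h1 t ht).fun_mul ((hw t ht).fun_mul (hv t ht))) (h2 t ht),
      deriv_fun_mul (h1 t ht) ((hw t ht).fun_mul (hv t ht)),
      deriv_fun_mul (hw t ht) (hv t ht)] at hmain
  have hchain : deriv (fun s => p (x s) * deriv u (x s)) t
      = deriv (fun z => p z * deriv u z) (x t) * deriv x t := by
    have := deriv_comp t (hpu (x t) ⟨t, ht, rfl⟩) (hx t ht)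
    simpa [Function.comp_def] using this
  have heqt := heq (x t) ⟨t, ht, rfl⟩
  rw [huv t ht] at heqt
  have hX := hx' t ht
  rw [hchain, hdu t ht] at hmain
  set dA := deriv (fun s => (p (x s) / deriv x s) * deriv w s) t with hdA
  set dP := deriv (fun s => (p (x s) * w s ^ 2 / deriv x s) * deriv v s) t with hdP
  set dU := deriv (fun z => p z * deriv u z) (x t) with hdU
  field_simp at hmain ⊢
  have hdPeq : dP = w t * dU * deriv x t - dA * (w t * v t) := by
    apply mul_right_cancel₀ hX
    linear_combination -hmain
  rw [hdPeq]
  linear_combination (w t * deriv x t) * heqt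
end

section
/- Let α < β, let p, q, r : ℝ → ℝ with p and r strictly positive and sufficiently smooth on an interval (a,b), and let λ ∈ ℝ. Let x : ℝ → ℝ map (α,β) into (a,b), be differentiable with ẋ(t) = √(p(x(t))/r(x(t))) for all t ∈ (α,β), and set w(t) = (p(x(t))·r(x(t)))^(−1/4), assumed twice differentiable on (α,β). Suppose u is differentiable with y ↦ p(y)·u'(y) differentiable on (a,b) and −(d/dy)(p(y)·u'(y)) + q(y)·u(y) = λ·r(y)·u(y) for all y ∈ (a,b). Define v(t) = u(x(t))/w(t). Then v is twice differentiable on (α,β) and −v''(t) + I(t)·v(t) = λ·v(t) for all t ∈ (α,β), where I(t) = q(x(t))/r(x(t)) + w(t)·(d²/dt²)(1/w)(t). -/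
/-- Liouville's transformation. With `dx/dt = √(p/r)`,
`w = (p·r)^(−1/4)` and `v = u∘x / w`, a solution `u` of the canonical
Sturm–Liouville equation gives a solution `v` of the Schrödinger form
`−v'' + I·v = λ·v` where `I(t) = q/r + w·(1/w)''`. -/
theorem stmt4 (α β a b lam : ℝ) (hαβ : α < β) (hab : a < b)
    (p q r : ℝ → ℝ)
    (hp : ∀ y ∈ Set.Ioo a b, 0 < p y) (hr : ∀ y ∈ Set.Ioo a b, 0 < r y)
    (hps : ContDiffOn ℝ 2 p (Set.Ioo a b)) (hrs : ContDiffOn ℝ 2 r (Set.Ioo a b))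
    (x : ℝ → ℝ) (hmaps : ∀ t ∈ Set.Ioo α β, x t ∈ Set.Ioo a b)
    (hx : ∀ t ∈ Set.Ioo α β, HasDerivAt x (Real.sqrt (p (x t) / r (x t))) t)
    (w : ℝ → ℝ) (hwdef : ∀ t, w t = (p (x t) * r (x t)) ^ (-(1 : ℝ) / 4))
    (hw : ∀ t ∈ Set.Ioo α β, DifferentiableAt ℝ w t)
    (hw' : ∀ t ∈ Set.Ioo α β, DifferentiableAt ℝ (deriv w) t)
    (u : ℝ → ℝ)
    (hu : ∀ y ∈ Set.Ioo a b, DifferentiableAt ℝ u y)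
    (hpu : ∀ y ∈ Set.Ioo a b, DifferentiableAt ℝ (fun z => p z * deriv u z) y)
    (heq : ∀ y ∈ Set.Ioo a b,
      -deriv (fun z => p z * deriv u z) y + q y * u y = lam * r y * u y)
    (v : ℝ → ℝ) (hvdef : ∀ t, v t = u (x t) / w t) :
    ∀ t ∈ Set.Ioo α β,
      DifferentiableAt ℝ v t ∧ DifferentiableAt ℝ (deriv v) t ∧
      -deriv (deriv v) t
          + (q (x t) / r (x t) + w t * deriv (deriv (fun s => 1 / w s)) t) * v t
        = lam * v t := by
  intro t ht
  have hIoo : Set.Ioo α β ∈ nhds t := isOpen_Ioo.mem_nhds ht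
  have hyab : x t ∈ Set.Ioo a b := hmaps t ht
  set φ : ℝ → ℝ := fun z => Real.sqrt (p z / r z) with hφdef
  set ψ : ℝ → ℝ := fun z => (p z * r z) ^ ((1:ℝ)/4) with hψdef
  set G : ℝ → ℝ := fun s => ψ (x s) with hGdef
  -- pointwise facts on (a,b)
  have hpz : ∀ z ∈ Set.Ioo a b, HasDerivAt p (deriv p z) z := fun z hz =>
    ((hps.differentiableOn two_ne_zero).differentiableAt (isOpen_Ioo.mem_nhds hz)).hasDerivAt
  have hrz : ∀ z ∈ Set.Ioo a b, HasDerivAt r (deriv r z) z := fun z hz =>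
    ((hrs.differentiableOn two_ne_zero).differentiableAt (isOpen_Ioo.mem_nhds hz)).hasDerivAt
  have hψpos : ∀ z ∈ Set.Ioo a b, 0 < ψ z := fun z hz =>
    Real.rpow_pos_of_pos (mul_pos (hp z hz) (hr z hz)) _
  have hφpos : ∀ z ∈ Set.Ioo a b, 0 < φ z := fun z hz =>
    Real.sqrt_pos.mpr (div_pos (hp z hz) (hr z hz))
  have hψz : ∀ z ∈ Set.Ioo a b, HasDerivAt ψ
      ((deriv p z * r z + p z * deriv r z) * ((1:ℝ)/4) * (p z * r z) ^ ((1:ℝ)/4 - 1)) z :=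
    fun z hz => ((hpz z hz).mul (hrz z hz)).rpow_const
      (Or.inl (ne_of_gt (mul_pos (hp z hz) (hr z hz))))
  have hφz : ∀ z ∈ Set.Ioo a b, HasDerivAt φ
      (((deriv p z * r z - p z * deriv r z) / (r z) ^ 2) / (2 * Real.sqrt (p z / r z))) z :=
    fun z hz => ((hpz z hz).div (hrz z hz) (ne_of_gt (hr z hz))).sqrt
      (ne_of_gt (div_pos (hp z hz) (hr z hz)))
  -- w in terms of ψ
  have hwval : ∀ s ∈ Set.Ioo α β, w s = (ψ (x s))⁻¹ := by
    intro s hs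
    have hpos : 0 < p (x s) * r (x s) := mul_pos (hp _ (hmaps s hs)) (hr _ (hmaps s hs))
    rw [hwdef s, show (-(1:ℝ)/4) = -((1:ℝ)/4) by norm_num, Real.rpow_neg hpos.le]
  have hwne : ∀ s ∈ Set.Ioo α β, w s ≠ 0 := fun s hs => by
    rw [hwval s hs]; exact inv_ne_zero (ne_of_gt (hψpos _ (hmaps s hs)))
  have hinvw : ∀ s ∈ Set.Ioo α β, 1 / w s = G s := by
    intro s hs
    rw [hwval s hs, one_div, inv_inv]
  have hVon : ∀ s ∈ Set.Ioo α β, v s = u (x s) * G s := by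
    intro s hs
    rw [hvdef s, div_eq_mul_inv, ← one_div, hinvw s hs]
  -- derivatives of u∘x and G on (α,β)
  have hU4 : ∀ s ∈ Set.Ioo α β, HasDerivAt (fun τ => u (x τ)) (deriv u (x s) * φ (x s)) s :=
    fun s hs => HasDerivAt.comp s (hu _ (hmaps s hs)).hasDerivAt (hx s hs)
  have hGs : ∀ s ∈ Set.Ioo α β, HasDerivAt G
      ((deriv p (x s) * r (x s) + p (x s) * deriv r (x s)) * ((1:ℝ)/4)
        * (p (x s) * r (x s)) ^ ((1:ℝ)/4 - 1) * φ (x s)) s :=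
    fun s hs => HasDerivAt.comp s (hψz _ (hmaps s hs)) (hx s hs)
  -- first derivative of v on (α,β)
  set VD : ℝ → ℝ := fun s => deriv u (x s) * φ (x s) * G s + u (x s) * deriv G s with hVDdef
  have hVev : ∀ s ∈ Set.Ioo α β, v =ᶠ[nhds s] fun τ => u (x τ) * G τ := fun s hs =>
    Filter.eventuallyEq_of_mem (isOpen_Ioo.mem_nhds hs) hVon
  have hderiv_v : ∀ s ∈ Set.Ioo α β, deriv v s = VD s := by
    intro s hs
    have h1 : HasDerivAt (fun τ => u (x τ) * G τ)
        (deriv u (x s) * φ (x s) * G s + u (x s)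
          * ((deriv p (x s) * r (x s) + p (x s) * deriv r (x s)) * ((1:ℝ)/4)
            * (p (x s) * r (x s)) ^ ((1:ℝ)/4 - 1) * φ (x s))) s :=
      (hU4 s hs).mul (hGs s hs)
    rw [(hVev s hs).deriv_eq, h1.deriv, hVDdef]
    simp only [(hGs s hs).deriv]
  have hVDev : deriv v =ᶠ[nhds t] VD := Filter.eventuallyEq_of_mem hIoo hderiv_v
  -- second derivative ingredients at t
  have hyp : 0 < p (x t) := hp _ hyab
  have hyr : 0 < r (x t) := hr _ hyab
  -- second derivative of u at y := x t
  have hPUy : HasDerivAt (fun z => p z * deriv u z)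
      (deriv (fun z => p z * deriv u z) (x t)) (x t) := (hpu _ hyab).hasDerivAt
  have hueq : deriv u =ᶠ[nhds (x t)] fun z => (p z * deriv u z) / p z :=
    Filter.eventuallyEq_of_mem (isOpen_Ioo.mem_nhds hyab)
      (fun z hz => (mul_div_cancel_left₀ _ (ne_of_gt (hp z hz))).symm)
  obtain ⟨u2, hu2⟩ : ∃ c, HasDerivAt (deriv u) c (x t) :=
    ⟨_, ((hPUy.div (hpz _ hyab) (ne_of_gt hyp))).congr_of_eventuallyEq hueq⟩
  have hPUrel : deriv (fun z => p z * deriv u z) (x t)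
      = deriv p (x t) * deriv u (x t) + p (x t) * u2 :=
    ((hpz _ hyab).mul hu2).deriv
  have hkey : p (x t) * u2
      = q (x t) * u (x t) - lam * r (x t) * u (x t) - deriv p (x t) * deriv u (x t) := by
    have h := heq _ hyab
    rw [hPUrel] at h
    linarith
  -- differentiability of deriv G at t
  have hGeqw : ∀ s ∈ Set.Ioo α β, deriv G s = -(deriv w s) / (w s) ^ 2 := by
    intro s hs
    have h1 : G =ᶠ[nhds s] fun τ => (w τ)⁻¹ :=
      Filter.eventuallyEq_of_mem (isOpen_Ioo.mem_nhds hs)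
        (fun τ hτ => by rw [hwval τ hτ, inv_inv])
    rw [h1.deriv_eq]; exact ((hw s hs).hasDerivAt.inv (hwne s hs)).deriv
  have hdGdiff : DifferentiableAt ℝ (deriv G) t := by
    have h2 : DifferentiableAt ℝ (fun s => -(deriv w s) / (w s) ^ 2) t :=
      (hw' t ht).neg.div ((hw t ht).pow 2) (pow_ne_zero 2 (hwne t ht))
    exact h2.congr_of_eventuallyEq
      (Filter.eventuallyEq_of_mem hIoo hGeqw)
  -- second derivative of v at t
  have h1 : HasDerivAt (fun s => deriv u (x s)) (u2 * φ (x t)) t :=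
    HasDerivAt.comp t hu2 (hx t ht)
  have h2 : HasDerivAt (fun s => φ (x s))
      (((deriv p (x t) * r (x t) - p (x t) * deriv r (x t)) / (r (x t)) ^ 2)
        / (2 * Real.sqrt (p (x t) / r (x t))) * φ (x t)) t :=
    (hφz _ hyab).comp t (hx t ht)
  have h3 : HasDerivAt G
      ((deriv p (x t) * r (x t) + p (x t) * deriv r (x t)) * ((1:ℝ)/4)
        * (p (x t) * r (x t)) ^ ((1:ℝ)/4 - 1) * φ (x t)) t := hGs t ht
  have h4 : HasDerivAt (fun s => u (x s)) (deriv u (x t) * φ (x t)) t := hU4 t ht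
  have h5 : HasDerivAt (deriv G) (deriv (deriv G) t) t := hdGdiff.hasDerivAt
  have hVD : HasDerivAt VD
      ((u2 * φ (x t) * φ (x t)
          + deriv u (x t) * (((deriv p (x t) * r (x t) - p (x t) * deriv r (x t)) / (r (x t)) ^ 2)
            / (2 * Real.sqrt (p (x t) / r (x t))) * φ (x t))) * G t
        + deriv u (x t) * φ (x t)
          * ((deriv p (x t) * r (x t) + p (x t) * deriv r (x t)) * ((1:ℝ)/4)
            * (p (x t) * r (x t)) ^ ((1:ℝ)/4 - 1) * φ (x t))
        + (deriv u (x t) * φ (x t) * deriv G t + u (x t) * deriv (deriv G) t)) t :=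
    ((h1.mul h2).mul h3).add (h4.mul h5)
  -- invariant identification
  have hinv2 : deriv (deriv (fun s => 1 / w s)) t = deriv (deriv G) t := by
    have h6 : deriv (fun s => 1 / w s) =ᶠ[nhds t] deriv G :=
      Filter.eventuallyEq_of_mem hIoo (fun s hs =>
        (Filter.eventuallyEq_of_mem (isOpen_Ioo.mem_nhds hs) hinvw).deriv_eq)
    exact h6.deriv_eq
  refine ⟨?_, ?_, ?_⟩
  · exact ((hU4 t ht).mul (hGs t ht)).differentiableAt.congr_of_eventuallyEq (hVev t ht)
  · exact hVD.differentiableAt.congr_of_eventuallyEq hVDev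
  · rw [hVDev.deriv_eq, hVD.deriv, hinv2, hVon t ht, hwval t ht]
    rw [(hGs t ht).deriv]
    have hGt : G t = ψ (x t) := rfl
    rw [hGt]
    set Y := x t
    set S := ψ Y with hS
    set F := φ Y with hF
    have hSpos : 0 < S := hψpos _ hyab
    have hFpos : 0 < F := hφpos _ hyab
    have hF2 : F * F = p Y / r Y := Real.mul_self_sqrt (div_pos hyp hyr).le
    have hSrel : (p Y * r Y) ^ ((1:ℝ)/4 - 1) = S / (p Y * r Y) := by
      rw [hS, hψdef, Real.rpow_sub (mul_pos hyp hyr), Real.rpow_one]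
    have hFval : Real.sqrt (p Y / r Y) = F := rfl
    rw [hSrel, hFval]
    have hrne : r Y ≠ 0 := ne_of_gt hyr
    have hpne : p Y ≠ 0 := ne_of_gt hyp
    have hSne : S ≠ 0 := ne_of_gt hSpos
    have hFne : F ≠ 0 := ne_of_gt hFpos
    have hFF : F * F * r Y = p Y := by
      rw [hF2]; field_simp
    field_simp
    linear_combination (-8*S*(p Y)*(r Y)) * hkey
      + (4*S*(-2*(p Y)*u2*(r Y) - (p Y)*deriv u Y*deriv r Y - (r Y)*deriv u Y*deriv p Y)) * hFF
end

section
/- In the setting of Liouville's transformation, let p : ℝ → ℝ, let x : ℝ → ℝ be differentiable at α with ẋ(α) ≠ 0 and x(α) = a, let w be differentiable at α with w(α) ≠ 0, let u and v be differentiable at a and α respectively with u(x(t)) = w(t)·v(t) near α. If δ₀·u(a) − δ₁·p(a)·u'(a) = 0 for real constants δ₀, δ₁, then δ₂·v(α) − δ₁·P(α)·v'(α) = 0, where δ₂ = δ₀·w(α)² − δ₁·p(a)·w(α)·(w'(α)/ẋ(α)) and P(α) = p(a)·w(α)²/ẋ(α). -/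
/-- under Liouville's transformation the regular boundary condition
`δ₀·u(a) − δ₁·p(a)·u'(a) = 0` becomes `δ₂·v(α) − δ₁·P(α)·v'(α) = 0` with
`δ₂ = δ₀·w(α)² − δ₁·p(a)·w(α)·(w'(α)/ẋ(α))` and `P(α) = p(a)·w(α)²/ẋ(α)`. -/
theorem stmt5 (p x w u v : ℝ → ℝ) (α a δ₀ δ₁ : ℝ)
    (hx : DifferentiableAt ℝ x α) (hx' : deriv x α ≠ 0) (hxa : x α = a)
    (hw : DifferentiableAt ℝ w α) (hw0 : w α ≠ 0)
    (hu : DifferentiableAt ℝ u a) (hv : DifferentiableAt ℝ v α)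
    (huv : ∀ᶠ t in nhds α, u (x t) = w t * v t)
    (hbc : δ₀ * u a - δ₁ * p a * deriv u a = 0) :
    (δ₀ * w α ^ 2 - δ₁ * p a * w α * (deriv w α / deriv x α)) * v α
      - δ₁ * (p a * w α ^ 2 / deriv x α) * deriv v α = 0 := by
  have h1 : u a = w α * v α := by
    have := huv.self_of_nhds
    rwa [hxa] at this
  have hc : deriv (u ∘ x) α = deriv u a * deriv x α := by
    rw [deriv_comp α (hxa ▸ hu) hx, hxa]
  have hd : deriv (u ∘ x) α = deriv (fun t => w t * v t) α :=
    Filter.EventuallyEq.deriv_eq huv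
  have hm : deriv (fun t => w t * v t) α = deriv w α * v α + w α * deriv v α :=
    deriv_mul hw hv
  have h2 : deriv u a * deriv x α = deriv w α * v α + w α * deriv v α := by
    rw [← hc, hd, hm]
  field_simp
  linear_combination (w α * deriv x α) * hbc + (δ₁ * p a * w α) * h2 + (-(δ₀ * w α * deriv x α)) * h1
end

section
/- Let α < β, let p, q, r : ℝ → ℝ with p and r strictly positive and sufficiently smooth, let λ ∈ ℝ. Let x : ℝ → ℝ be differentiable on (α,β) with ẋ(t) = √(p(x(t))/r(x(t))) > 0 (so x is strictly increasing onto an interval (a,b)), set w(t) = (p(x(t))·r(x(t)))^(−1/4), assumed twice differentiable, and set I(t) = q(x(t))/r(x(t)) + w(t)·(d²/dt²)(1/w)(t). Suppose v is twice differentiable on (α,β) and satisfies −v''(t) + I(t)·v(t) = λ·v(t) for all t ∈ (α,β). Define u : (a,b) → ℝ by u(x(t)) = w(t)·v(t), and assume u is differentiable with y ↦ p(y)·u'(y) differentiable on (a,b). Then −(d/dy)(p(y)·u'(y)) + q(y)·u(y) = λ·r(y)·u(y) for all y ∈ (a,b). -/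
/-- inverse Liouville transformation. A solution `v` of the
Schrödinger form `−v'' + I·v = λ·v`, with `I = q/r + w·(1/w)''`,
`dx/dt = √(p/r) > 0`, `w = (p·r)^(−1/4)` and `u∘x = w·v`, yields a solution `u`
of the canonical Sturm–Liouville equation on `(a,b) = x((α,β))`. -/
theorem stmt6 (α β a b lam : ℝ) (hαβ : α < β)
    (p q r : ℝ → ℝ)
    (hp : ∀ y ∈ Set.Ioo a b, 0 < p y) (hr : ∀ y ∈ Set.Ioo a b, 0 < r y)
    (hps : ContDiffOn ℝ 2 p (Set.Ioo a b)) (hrs : ContDiffOn ℝ 2 r (Set.Ioo a b))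
    (x : ℝ → ℝ)
    (hx : ∀ t ∈ Set.Ioo α β, HasDerivAt x (Real.sqrt (p (x t) / r (x t))) t)
    (hxpos : ∀ t ∈ Set.Ioo α β, 0 < Real.sqrt (p (x t) / r (x t)))
    (himg : x '' Set.Ioo α β = Set.Ioo a b)
    (w : ℝ → ℝ) (hwdef : ∀ t, w t = (p (x t) * r (x t)) ^ (-(1 : ℝ) / 4))
    (hw : ∀ t ∈ Set.Ioo α β, DifferentiableAt ℝ w t)
    (hw' : ∀ t ∈ Set.Ioo α β, DifferentiableAt ℝ (deriv w) t)
    (v : ℝ → ℝ)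
    (hv : ∀ t ∈ Set.Ioo α β, DifferentiableAt ℝ v t)
    (hv' : ∀ t ∈ Set.Ioo α β, DifferentiableAt ℝ (deriv v) t)
    (heqv : ∀ t ∈ Set.Ioo α β,
      -deriv (deriv v) t
          + (q (x t) / r (x t) + w t * deriv (deriv (fun s => 1 / w s)) t) * v t
        = lam * v t)
    (u : ℝ → ℝ) (hudef : ∀ t ∈ Set.Ioo α β, u (x t) = w t * v t)
    (hu : ∀ y ∈ Set.Ioo a b, DifferentiableAt ℝ u y)
    (hpu : ∀ y ∈ Set.Ioo a b, DifferentiableAt ℝ (fun z => p z * deriv u z) y) :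
    ∀ y ∈ Set.Ioo a b,
      -deriv (fun z => p z * deriv u z) y + q y * u y = lam * r y * u y := by
  intro y hy
  rw [← himg] at hy
  obtain ⟨t, ht, rfl⟩ := hy
  have hmem : ∀ s ∈ Set.Ioo α β, x s ∈ Set.Ioo a b := fun s hs =>
    himg ▸ Set.mem_image_of_mem x hs
  have hwpos : ∀ s ∈ Set.Ioo α β, 0 < w s := fun s hs => by
    rw [hwdef]
    exact Real.rpow_pos_of_pos (mul_pos (hp _ (hmem s hs)) (hr _ (hmem s hs))) _
  set S : ℝ → ℝ := fun s => Real.sqrt (p (x s) / r (x s)) with hSdef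
  have hSpos : ∀ s ∈ Set.Ioo α β, 0 < S s := hxpos
  set g : ℝ → ℝ := fun s => 1 / w s with hgdef
  -- sqrt/rpow algebra
  have key : ∀ s ∈ Set.Ioo α β,
      p (x s) * (S s)⁻¹ = ((w s)⁻¹) ^ 2 ∧ (S s)⁻¹ = r (x s) * (w s) ^ 2 := by
    intro s hs
    have hP : 0 < p (x s) := hp _ (hmem s hs)
    have hR : 0 < r (x s) := hr _ (hmem s hs)
    have hsp : Real.sqrt (p (x s)) ^ 2 = p (x s) := Real.sq_sqrt hP.le
    have hsr : Real.sqrt (r (x s)) ^ 2 = r (x s) := Real.sq_sqrt hR.le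
    have hsppos : 0 < Real.sqrt (p (x s)) := Real.sqrt_pos.2 hP
    have hsrpos : 0 < Real.sqrt (r (x s)) := Real.sqrt_pos.2 hR
    have hSval : S s = Real.sqrt (p (x s)) / Real.sqrt (r (x s)) := by
      simp only [hSdef]
      rw [Real.sqrt_div hP.le]
    have hw2 : w s ^ 2 * (Real.sqrt (p (x s)) * Real.sqrt (r (x s))) = 1 := by
      rw [← Real.sqrt_mul hP.le, hwdef, Real.sqrt_eq_rpow,
        ← Real.rpow_natCast _ 2, ← Real.rpow_mul (mul_pos hP hR).le,
        ← Real.rpow_add (mul_pos hP hR)]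
      norm_num
    constructor
    · rw [hSval]
      have hwne : w s ≠ 0 := (hwpos s hs).ne'
      field_simp
      nlinarith [hw2, hsp, hsr]
    · rw [hSval]
      field_simp
      nlinarith [hw2, hsp, hsr]
  -- step A : derivative of u along x
  have hU : ∀ s ∈ Set.Ioo α β,
      deriv u (x s) * S s = deriv w s * v s + w s * deriv v s := by
    intro s hs
    have h1 : HasDerivAt (fun τ => u (x τ)) (deriv u (x s) * S s) s := by
      have := ((hu _ (hmem s hs)).hasDerivAt.comp s (hx s hs))
      simpa [hSdef, Function.comp_def] using this
    have h2 : HasDerivAt (fun τ => w τ * v τ) (deriv w s * v s + w s * deriv v s) s :=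
      (hw s hs).hasDerivAt.mul (hv s hs).hasDerivAt
    have h3 : (fun τ => u (x τ)) =ᶠ[nhds s] fun τ => w τ * v τ :=
      Filter.eventuallyEq_of_mem (isOpen_Ioo.mem_nhds hs) hudef
    exact ((h2.congr_of_eventuallyEq h3).unique h1).symm
  -- step B : p·u' along x equals -g'·v + g·v'
  have hgderiv : ∀ s ∈ Set.Ioo α β,
      deriv g s = -deriv w s / (w s) ^ 2 := by
    intro s hs
    have : deriv (fun τ => (w τ)⁻¹) s = -deriv w s / (w s) ^ 2 :=
      deriv_inv'' (hw s hs) (hwpos s hs).ne'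
    rw [hgdef]
    simpa [one_div] using this
  have hPU : ∀ s ∈ Set.Ioo α β,
      p (x s) * deriv u (x s) = -deriv g s * v s + g s * deriv v s := by
    intro s hs
    have hSne : S s ≠ 0 := (hSpos s hs).ne'
    have hwne : w s ≠ 0 := (hwpos s hs).ne'
    have h1 : deriv u (x s) = (deriv w s * v s + w s * deriv v s) * (S s)⁻¹ := by
      field_simp
      linarith [hU s hs]
    rw [h1, hgderiv s hs, hgdef]
    have h2 := (key s hs).1
    have h3 : p (x s) * ((deriv w s * v s + w s * deriv v s) * (S s)⁻¹)
        = (w s)⁻¹ ^ 2 * (deriv w s * v s + w s * deriv v s) := by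
      rw [← h2]; ring
    rw [h3]
    field_simp
  -- step C : differentiate at t
  have hgd : DifferentiableAt ℝ g t := by
    rw [hgdef]
    simp only [one_div]; exact (hw t ht).inv (hwpos t ht).ne'
  have hDg : DifferentiableAt ℝ (deriv g) t := by
    have heq : deriv g =ᶠ[nhds t] fun s => -deriv w s / (w s) ^ 2 :=
      Filter.eventuallyEq_of_mem (isOpen_Ioo.mem_nhds ht) hgderiv
    refine heq.differentiableAt_iff.2 ?_
    exact ((hw' t ht).neg).div ((hw t ht).pow 2) (pow_ne_zero 2 (hwpos t ht).ne')
  have hF : HasDerivAt (fun s => -deriv g s * v s + g s * deriv v s)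
      (-deriv (deriv g) t * v t + g t * deriv (deriv v) t) t := by
    have h1 : HasDerivAt (fun s => -deriv g s * v s)
        (-deriv (deriv g) t * v t + -deriv g t * deriv v t) t :=
      (hDg.hasDerivAt.neg).mul (hv t ht).hasDerivAt
    have h2 : HasDerivAt (fun s => g s * deriv v s)
        (deriv g t * deriv v t + g t * deriv (deriv v) t) t :=
      hgd.hasDerivAt.mul (hv' t ht).hasDerivAt
    have := h1.add h2
    exact this.congr_deriv (by ring)
  have hH : HasDerivAt (fun τ => p (x τ) * deriv u (x τ))
      (deriv (fun z => p z * deriv u z) (x t) * S t) t := by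
    have := (hpu _ (hmem t ht)).hasDerivAt.comp t (hx t ht)
    simpa [hSdef, Function.comp_def] using this
  have heqF : (fun τ => p (x τ) * deriv u (x τ)) =ᶠ[nhds t]
      fun s => -deriv g s * v s + g s * deriv v s :=
    Filter.eventuallyEq_of_mem (isOpen_Ioo.mem_nhds ht) hPU
  have hD : deriv (fun z => p z * deriv u z) (x t) * S t
      = -deriv (deriv g) t * v t + g t * deriv (deriv v) t :=
    ((hF.congr_of_eventuallyEq heqF).unique hH).symm
  -- final algebra
  have hR : 0 < r (x t) := hr _ (hmem t ht)
  have hW : 0 < w t := hwpos t ht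
  have hSt : 0 < S t := hSpos t ht
  have hkey2 : (S t)⁻¹ = r (x t) * (w t) ^ 2 := (key t ht).2
  have hgt : g t * w t = 1 := by rw [hgdef]; field_simp
  have heq := heqv t ht
  have hG : deriv (deriv (fun s => 1 / w s)) t = deriv (deriv g) t := by rw [hgdef]
  rw [hG] at heq
  rw [hudef t ht]
  have hDval : deriv (fun z => p z * deriv u z) (x t)
      = (-deriv (deriv g) t * v t + g t * deriv (deriv v) t) * (r (x t) * (w t) ^ 2) := by
    rw [← hkey2]
    field_simp at hD ⊢
    linarith [hD]
  rw [hDval]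
  have hvpp : deriv (deriv v) t
      = (q (x t) / r (x t)) * v t + w t * deriv (deriv g) t * v t - lam * v t := by
    linarith [heq]
  rw [hvpp]
  have hgt' : g t = (w t)⁻¹ := by rw [hgdef]; simp [one_div]
  rw [hgt']
  field_simp
  ring
end

section
/- Let k > 0, m > 0, r₀ > 0, x₀ ∈ ℝ, λ ∈ ℝ, and let ρ be a real root of ρ² − ρ − k = 0 with 2ρ+1 ≠ 0. Set a = −x₀ + m^(2ρ+1)/(r₀(2ρ+1)) and b = −x₀ + (π+m)^(2ρ+1)/(r₀(2ρ+1)), and note a < b and r₀(2ρ+1)(x+x₀) > 0 for x ∈ (a,b). Define p(x) = (1/r₀)·(r₀(2ρ+1)(x+x₀))^(4ρ/(2ρ+1)) and t(x) = −m + (r₀(2ρ+1)(x+x₀))^(1/(2ρ+1)). Suppose v : ℝ → ℝ is twice differentiable and satisfies −v''(t) + (k/(t+m)²)·v(t) = λ·v(t) for all t ∈ (0,π), with v(0) = 0 = v(π). Then u(x) = (r₀(2ρ+1)(x+x₀))^(−ρ/(2ρ+1))·v(t(x)) satisfies −(d/dx)(p(x)·u'(x)) = λ·r₀·u(x) for all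 x ∈ (a,b), and u(a) = 0 = u(b) (where u is extended continuously to the endpoints). -/
private lemma linW (R x₀ : ℝ) (z : ℝ) : HasDerivAt (fun y : ℝ => R * (y + x₀)) R z := by
  simpa using ((hasDerivAt_id z).add_const x₀).const_mul R

private lemma powW (R x₀ e : ℝ) (z : ℝ) (hz : R * (z + x₀) ≠ 0) :
    HasDerivAt (fun y : ℝ => (R * (y + x₀)) ^ e) (e * (R * (z + x₀)) ^ (e - 1) * R) z := by
  have h := (Real.hasDerivAt_rpow_const (p := e) (Or.inl hz)).comp z (linW R x₀ z)
  simpa only [Function.comp_def] using h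

set_option maxHeartbeats 1000000 in
/-- the generalized second Paine–de Hoog–Anderson problem
`−v'' + (k/(t+m)²)·v = λ·v` on `(0,π)` with Dirichlet conditions transforms back
to the canonical form `−(p·u')' = λ·r₀·u` with vanishing potential and constant
density, where `ρ` is a root of `ρ² − ρ − k = 0`. -/
theorem stmt8 (k m r₀ x₀ lam ρ : ℝ) (hk : 0 < k) (hm : 0 < m) (hr : 0 < r₀)
    (hρ : ρ ^ 2 - ρ - k = 0) (hρ1 : 2 * ρ + 1 ≠ 0)
    (a b : ℝ)
    (ha : a = -x₀ + m ^ (2 * ρ + 1) / (r₀ * (2 * ρ + 1)))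
    (hb : b = -x₀ + (Real.pi + m) ^ (2 * ρ + 1) / (r₀ * (2 * ρ + 1)))
    (v : ℝ → ℝ)
    (hv : ∀ s, DifferentiableAt ℝ v s) (hv' : ∀ s, DifferentiableAt ℝ (deriv v) s)
    (heq : ∀ s ∈ Set.Ioo 0 Real.pi,
      -deriv (deriv v) s + (k / (s + m) ^ 2) * v s = lam * v s)
    (hv0 : v 0 = 0) (hvπ : v Real.pi = 0)
    (p t u : ℝ → ℝ)
    (hpdef : ∀ x, p x =
      (1 / r₀) * (r₀ * (2 * ρ + 1) * (x + x₀)) ^ (4 * ρ / (2 * ρ + 1)))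
    (htdef : ∀ x, t x =
      -m + (r₀ * (2 * ρ + 1) * (x + x₀)) ^ (1 / (2 * ρ + 1)))
    (hudef : ∀ x, u x =
      (r₀ * (2 * ρ + 1) * (x + x₀)) ^ (-ρ / (2 * ρ + 1)) * v (t x)) :
    a < b ∧ (∀ x ∈ Set.Ioo a b, 0 < r₀ * (2 * ρ + 1) * (x + x₀)) ∧
    (∀ x ∈ Set.Ioo a b,
      -deriv (fun z => p z * deriv u z) x = lam * r₀ * u x) ∧
    u a = 0 ∧ u b = 0 := by
  have hc : (2 * ρ + 1) ≠ 0 := hρ1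
  have hc' : ρ*2+1 ≠ 0 := by contrapose! hc; linarith
  have hR : r₀ * (2 * ρ + 1) ≠ 0 := mul_ne_zero hr.ne' hc
  have hπ := Real.pi_pos
  have hm' : (0:ℝ) < Real.pi + m := by linarith
  have hmπ : m < Real.pi + m := by linarith
  have hmc : 0 < m ^ (2 * ρ + 1) := Real.rpow_pos_of_pos hm _
  have hπc : 0 < (Real.pi + m) ^ (2 * ρ + 1) := Real.rpow_pos_of_pos hm' _
  have hmci : (m ^ (2*ρ+1)) ^ (1/(2*ρ+1)) = m := by
    rw [one_div]; exact Real.rpow_rpow_inv hm.le hc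
  have hπci : ((Real.pi + m) ^ (2*ρ+1)) ^ (1/(2*ρ+1)) = Real.pi + m := by
    rw [one_div]; exact Real.rpow_rpow_inv hm'.le hc
  have haw : r₀ * (2 * ρ + 1) * (a + x₀) = m ^ (2 * ρ + 1) := by
    rw [ha]; field_simp; ring
  have hbw : r₀ * (2 * ρ + 1) * (b + x₀) = (Real.pi + m) ^ (2 * ρ + 1) := by
    rw [hb]; field_simp; ring
  -- interval facts
  have hab : a < b := by
    rw [ha, hb]
    rcases hc.lt_or_gt with hcneg | hcpos
    · have hRn : r₀ * (2 * ρ + 1) < 0 := mul_neg_of_pos_of_neg hr hcneg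
      have := Real.rpow_lt_rpow_of_neg hm hmπ hcneg
      have := div_lt_div_of_neg_of_lt hRn this
      linarith
    · have hRp : 0 < r₀ * (2 * ρ + 1) := mul_pos hr hcpos
      have := Real.rpow_lt_rpow hm.le hmπ hcpos
      have := div_lt_div_of_pos_right this hRp
      linarith
  have hbnd : ∀ x ∈ Set.Ioo a b, 0 < r₀ * (2 * ρ + 1) * (x + x₀) ∧
      m < (r₀ * (2 * ρ + 1) * (x + x₀)) ^ (1/(2*ρ+1)) ∧
      (r₀ * (2 * ρ + 1) * (x + x₀)) ^ (1/(2*ρ+1)) < Real.pi + m := by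
    intro x hx
    rcases hc.lt_or_gt with hcneg | hcpos
    · have hRn : r₀ * (2 * ρ + 1) < 0 := mul_neg_of_pos_of_neg hr hcneg
      have h1 : r₀ * (2 * ρ + 1) * (x + x₀) < m ^ (2*ρ+1) := by
        rw [← haw]
        have : a + x₀ < x + x₀ := by have := hx.1; linarith
        nlinarith
      have h2 : (Real.pi + m) ^ (2*ρ+1) < r₀ * (2 * ρ + 1) * (x + x₀) := by
        rw [← hbw]
        have : x + x₀ < b + x₀ := by have := hx.2; linarith
        nlinarith
      have hw : 0 < r₀ * (2 * ρ + 1) * (x + x₀) := lt_trans hπc h2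
      have hic : 1/(2*ρ+1) < 0 := by
        exact one_div_neg.mpr hcneg
      refine ⟨hw, ?_, ?_⟩
      · have := Real.rpow_lt_rpow_of_neg hw h1 hic
        rwa [hmci] at this
      · have := Real.rpow_lt_rpow_of_neg hπc h2 hic
        rwa [hπci] at this
    · have hRp : 0 < r₀ * (2 * ρ + 1) := mul_pos hr hcpos
      have h1 : m ^ (2*ρ+1) < r₀ * (2 * ρ + 1) * (x + x₀) := by
        rw [← haw]
        have : a + x₀ < x + x₀ := by have := hx.1; linarith
        nlinarith
      have h2 : r₀ * (2 * ρ + 1) * (x + x₀) < (Real.pi + m) ^ (2*ρ+1) := by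
        rw [← hbw]
        have : x + x₀ < b + x₀ := by have := hx.2; linarith
        nlinarith
      have hw : 0 < r₀ * (2 * ρ + 1) * (x + x₀) := lt_trans hmc h1
      have hic : 0 < 1/(2*ρ+1) := by positivity
      refine ⟨hw, ?_, ?_⟩
      · have := Real.rpow_lt_rpow hmc.le h1 hic
        rwa [hmci] at this
      · have := Real.rpow_lt_rpow hw.le h2 hic
        rwa [hπci] at this
  -- endpoints
  have hta : t a = 0 := by rw [htdef a, haw, hmci]; ring
  have htb : t b = Real.pi := by rw [htdef b, hbw, hπci]; ring
  have hua : u a = 0 := by rw [hudef a, hta, hv0, mul_zero]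
  have hub : u b = 0 := by rw [hudef b, htb, hvπ, mul_zero]
  refine ⟨hab, fun x hx => (hbnd x hx).1, ?_, hua, hub⟩
  -- main ODE part
  intro x hx
  obtain ⟨hw, htl, htu⟩ := hbnd x hx
  have htderiv : ∀ z ∈ Set.Ioo a b, HasDerivAt t
      (1/(2*ρ+1) * (r₀ * (2*ρ+1) * (z+x₀)) ^ (1/(2*ρ+1) - 1) * (r₀ * (2*ρ+1))) z := by
    intro z hz
    have h := (powW (r₀ * (2*ρ+1)) x₀ (1/(2*ρ+1)) z (hbnd z hz).1.ne').const_add (-m)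
    have hts : t = fun y => -m + (r₀ * (2*ρ+1) * (y+x₀)) ^ (1/(2*ρ+1)) := funext htdef
    rw [hts]
    simpa using h
  have huderiv : ∀ z ∈ Set.Ioo a b, HasDerivAt u
      ((-ρ/(2*ρ+1)) * (r₀*(2*ρ+1)*(z+x₀)) ^ (-ρ/(2*ρ+1) - 1) * (r₀*(2*ρ+1)) * v (t z)
        + (r₀*(2*ρ+1)*(z+x₀)) ^ (-ρ/(2*ρ+1)) *
          (deriv v (t z) * (1/(2*ρ+1) * (r₀*(2*ρ+1)*(z+x₀)) ^ (1/(2*ρ+1) - 1) * (r₀*(2*ρ+1))))) z := by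
    intro z hz
    have hvt : HasDerivAt (fun y => v (t y))
        (deriv v (t z) * (1/(2*ρ+1) * (r₀*(2*ρ+1)*(z+x₀)) ^ (1/(2*ρ+1) - 1) * (r₀*(2*ρ+1)))) z := by
      have := ((hv (t z)).hasDerivAt).comp z (htderiv z hz)
      simpa only [Function.comp_def] using this
    have h := (powW (r₀*(2*ρ+1)) x₀ (-ρ/(2*ρ+1)) z (hbnd z hz).1.ne').mul hvt
    have hus : u = fun y => (r₀*(2*ρ+1)*(y+x₀)) ^ (-ρ/(2*ρ+1)) * v (t y) := funext hudef
    rw [hus]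
    exact h
  have hG : ∀ z ∈ Set.Ioo a b, p z * deriv u z =
      -ρ * (r₀*(2*ρ+1)*(z+x₀)) ^ ((ρ-1)/(2*ρ+1)) * v (t z)
        + (r₀*(2*ρ+1)*(z+x₀)) ^ (ρ/(2*ρ+1)) * deriv v (t z) := by
    intro z hz
    have hwz := (hbnd z hz).1
    rw [(huderiv z hz).deriv, hpdef z]
    have e1 : (r₀*(2*ρ+1)*(z+x₀)) ^ ((ρ-1)/(2*ρ+1)) =
        (r₀*(2*ρ+1)*(z+x₀)) ^ (4*ρ/(2*ρ+1)) * (r₀*(2*ρ+1)*(z+x₀)) ^ (-ρ/(2*ρ+1) - 1) := by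
      rw [← Real.rpow_add hwz]; congr 1; field_simp; ring
    have e2 : (r₀*(2*ρ+1)*(z+x₀)) ^ (ρ/(2*ρ+1)) =
        (r₀*(2*ρ+1)*(z+x₀)) ^ (4*ρ/(2*ρ+1)) * ((r₀*(2*ρ+1)*(z+x₀)) ^ (-ρ/(2*ρ+1)) *
          (r₀*(2*ρ+1)*(z+x₀)) ^ (1/(2*ρ+1) - 1)) := by
      rw [← Real.rpow_add hwz, ← Real.rpow_add hwz]; congr 1; field_simp; ring
    rw [e1, e2]
    field_simp
  -- derivative of the clean formula at x
  have ht'x := htderiv x hx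
  have hvt : HasDerivAt (fun y => v (t y))
      (deriv v (t x) * (1/(2*ρ+1) * (r₀*(2*ρ+1)*(x+x₀)) ^ (1/(2*ρ+1) - 1) * (r₀*(2*ρ+1)))) x := by
    have := ((hv (t x)).hasDerivAt).comp x ht'x
    simpa only [Function.comp_def] using this
  have hdvt : HasDerivAt (fun y => deriv v (t y))
      (deriv (deriv v) (t x) * (1/(2*ρ+1) * (r₀*(2*ρ+1)*(x+x₀)) ^ (1/(2*ρ+1) - 1) * (r₀*(2*ρ+1)))) x := by
    have := ((hv' (t x)).hasDerivAt).comp x ht'x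
    simpa only [Function.comp_def] using this
  have h1 := (HasDerivAt.const_mul (-ρ) (powW (r₀*(2*ρ+1)) x₀ ((ρ-1)/(2*ρ+1)) x hw.ne')).mul hvt
  have h2 := (powW (r₀*(2*ρ+1)) x₀ (ρ/(2*ρ+1)) x hw.ne').mul hdvt
  have hFd := h1.add h2
  have hEq : deriv (fun z => p z * deriv u z) x =
      -ρ * (((ρ-1)/(2*ρ+1)) * (r₀*(2*ρ+1)*(x+x₀)) ^ ((ρ-1)/(2*ρ+1) - 1) * (r₀*(2*ρ+1))) * v (t x)
        + (-ρ * (r₀*(2*ρ+1)*(x+x₀)) ^ ((ρ-1)/(2*ρ+1))) *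
          (deriv v (t x) * (1/(2*ρ+1) * (r₀*(2*ρ+1)*(x+x₀)) ^ (1/(2*ρ+1) - 1) * (r₀*(2*ρ+1))))
        + ((ρ/(2*ρ+1)) * (r₀*(2*ρ+1)*(x+x₀)) ^ (ρ/(2*ρ+1) - 1) * (r₀*(2*ρ+1)) * deriv v (t x)
          + (r₀*(2*ρ+1)*(x+x₀)) ^ (ρ/(2*ρ+1)) *
            (deriv (deriv v) (t x) * (1/(2*ρ+1) * (r₀*(2*ρ+1)*(x+x₀)) ^ (1/(2*ρ+1) - 1) * (r₀*(2*ρ+1))))) := by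
    have heqf : (fun z => p z * deriv u z) =ᶠ[nhds x]
        (fun z => -ρ * (r₀*(2*ρ+1)*(z+x₀)) ^ ((ρ-1)/(2*ρ+1)) * v (t z)
          + (r₀*(2*ρ+1)*(z+x₀)) ^ (ρ/(2*ρ+1)) * deriv v (t z)) := by
      filter_upwards [isOpen_Ioo.mem_nhds hx] with z hz using hG z hz
    rw [heqf.deriv_eq]
    exact hFd.deriv
  rw [hEq, hudef x]
  -- facts about s = t x
  have hsm : t x + m = (r₀*(2*ρ+1)*(x+x₀)) ^ (1/(2*ρ+1)) := by rw [htdef x]; ring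
  have hs : t x ∈ Set.Ioo 0 Real.pi := by
    constructor
    · have : m < t x + m := by rw [hsm]; exact htl
      linarith
    · have : t x + m < Real.pi + m := by rw [hsm]; exact htu
      linarith
  have hddv := heq (t x) hs
  have hsq : (t x + m)^2 = (r₀*(2*ρ+1)*(x+x₀)) ^ (2/(2*ρ+1)) := by
    rw [hsm, ← Real.rpow_natCast ((r₀*(2*ρ+1)*(x+x₀)) ^ (1/(2*ρ+1))) 2,
      ← Real.rpow_mul hw.le]
    congr 1
    push_cast
    ring
  rw [hsq] at hddv
  have hQ : (0:ℝ) < (r₀*(2*ρ+1)*(x+x₀)) ^ (2/(2*ρ+1)) := Real.rpow_pos_of_pos hw _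
  have hddv' : deriv (deriv v) (t x) * (r₀*(2*ρ+1)*(x+x₀)) ^ (2/(2*ρ+1)) =
      k * v (t x) - lam * v (t x) * (r₀*(2*ρ+1)*(x+x₀)) ^ (2/(2*ρ+1)) := by
    field_simp [hQ.ne'] at hddv
    linear_combination -hddv
  have hkρ' : ρ * (ρ - 1) = k := by linear_combination hρ
  have hcc : (2*ρ+1) * (1/(2*ρ+1)) = 1 := by field_simp
  have I1 : (r₀*(2*ρ+1)*(x+x₀)) ^ ((ρ-1)/(2*ρ+1)) * (r₀*(2*ρ+1)*(x+x₀)) ^ (1/(2*ρ+1) - 1)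
      = (r₀*(2*ρ+1)*(x+x₀)) ^ (ρ/(2*ρ+1) - 1) := by
    rw [← Real.rpow_add hw]; congr 1; field_simp; ring
  have I3 : (r₀*(2*ρ+1)*(x+x₀)) ^ (ρ/(2*ρ+1)) * (r₀*(2*ρ+1)*(x+x₀)) ^ (1/(2*ρ+1) - 1)
      = (r₀*(2*ρ+1)*(x+x₀)) ^ (-ρ/(2*ρ+1)) := by
    rw [← Real.rpow_add hw]; congr 1; field_simp; ring
  have I2 : (r₀*(2*ρ+1)*(x+x₀)) ^ ((ρ-1)/(2*ρ+1) - 1) * (r₀*(2*ρ+1)*(x+x₀)) ^ (2/(2*ρ+1))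
      = (r₀*(2*ρ+1)*(x+x₀)) ^ (-ρ/(2*ρ+1)) := by
    rw [← Real.rpow_add hw]; congr 1; field_simp; ring
  linear_combination
    (ρ * (1/(2*ρ+1)) * (r₀*(2*ρ+1)) * deriv v (t x)) * I1
    + (-( (1/(2*ρ+1)) * (r₀*(2*ρ+1)) * deriv (deriv v) (t x))) * I3
    + ((1/(2*ρ+1)) * (r₀*(2*ρ+1)) * deriv (deriv v) (t x)) * I2
    + (-( (1/(2*ρ+1)) * (r₀*(2*ρ+1)) * (r₀*(2*ρ+1)*(x+x₀)) ^ ((ρ-1)/(2*ρ+1) - 1))) * hddv'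
    + ((1/(2*ρ+1)) * (r₀*(2*ρ+1)) * (r₀*(2*ρ+1)*(x+x₀)) ^ ((ρ-1)/(2*ρ+1) - 1) * v (t x)) * hkρ'
    + (lam * (1/(2*ρ+1)) * (r₀*(2*ρ+1)) * v (t x)) * I2
    + (lam * r₀ * (r₀*(2*ρ+1)*(x+x₀)) ^ (-ρ/(2*ρ+1)) * v (t x)) * hcc
end

section
/- Let k = 3/4, m > 0, r₀ > 0, x₀ ∈ ℝ, λ ∈ ℝ. Set a = −x₀ + m⁴/(4r₀) and b = −x₀ + (π+m)⁴/(4r₀), define t(x) = −m + (4r₀(x+x₀))^(1/4), and suppose v : ℝ → ℝ is twice differentiable and satisfies −v''(t) + (3/(4(t+m)²))·v(t) = λ·v(t) for all t ∈ (0,π), with v(0) = 0 = v(π). Then u(x) = (4r₀(x+x₀))^(−3/8)·v(t(x)) satisfies −(d/dx)(8√r₀·(x+x₀)^(3/2)·u'(x)) = λ·r₀·u(x) for all x ∈ (a,b), and u(a) = 0 = u(b). -/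
set_option maxHeartbeats 2000000 in
/-- for `k = 3/4` (root `ρ₁ = 3/2`), the second PdHA problem
transforms to the canonical form `−(8√r₀·(x+x₀)^(3/2)·u')' = λ·r₀·u`
with Dirichlet boundary conditions. -/
theorem stmt10 (m r₀ x₀ lam : ℝ) (hm : 0 < m) (hr : 0 < r₀)
    (a b : ℝ)
    (ha : a = -x₀ + m ^ 4 / (4 * r₀))
    (hb : b = -x₀ + (Real.pi + m) ^ 4 / (4 * r₀))
    (v : ℝ → ℝ)
    (hv : ∀ s, DifferentiableAt ℝ v s) (hv' : ∀ s, DifferentiableAt ℝ (deriv v) s)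
    (heq : ∀ s ∈ Set.Ioo 0 Real.pi,
      -deriv (deriv v) s + (3 / (4 * (s + m) ^ 2)) * v s = lam * v s)
    (hv0 : v 0 = 0) (hvπ : v Real.pi = 0)
    (t u : ℝ → ℝ)
    (htdef : ∀ x, t x = -m + (4 * r₀ * (x + x₀)) ^ ((1 : ℝ) / 4))
    (hudef : ∀ x, u x = (4 * r₀ * (x + x₀)) ^ (-(3 : ℝ) / 8) * v (t x)) :
    (∀ x ∈ Set.Ioo a b,
      -deriv (fun z => 8 * Real.sqrt r₀ * (z + x₀) ^ ((3 : ℝ) / 2) * deriv u z) x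
        = lam * r₀ * u x) ∧
    u a = 0 ∧ u b = 0 := by
  have hc : (0:ℝ) < 4 * r₀ := by linarith
  set c := 4 * r₀ with hcdef
  have hπm : (0:ℝ) < Real.pi + m := by linarith [Real.pi_pos]
  have hm4 : ((m ^ 4 : ℝ)) ^ ((1:ℝ)/4) = m := by
    rw [← Real.rpow_natCast m 4, ← Real.rpow_mul hm.le]; norm_num
  have hπm4 : (((Real.pi + m) ^ 4 : ℝ)) ^ ((1:ℝ)/4) = Real.pi + m := by
    rw [← Real.rpow_natCast (Real.pi + m) 4, ← Real.rpow_mul hπm.le]; norm_num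
  -- boundary values
  have hua : u a = 0 := by
    have h4 : c * (a + x₀) = m ^ 4 := by rw [ha]; field_simp; ring
    have hta : t a = 0 := by rw [htdef, h4, hm4]; ring
    rw [hudef, hta, hv0, mul_zero]
  have hub : u b = 0 := by
    have h4 : c * (b + x₀) = (Real.pi + m) ^ 4 := by rw [hb]; field_simp; ring
    have htb : t b = Real.pi := by rw [htdef, h4, hπm4]; ring
    rw [hudef, htb, hvπ, mul_zero]
  refine ⟨?_, hua, hub⟩
  -- derivative machinery
  have hwD : ∀ z : ℝ, HasDerivAt (fun z => c * (z + x₀)) c z := fun z => by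
    simpa using ((hasDerivAt_id z).add_const x₀).const_mul c
  have hrpow : ∀ (p : ℝ) (z : ℝ), 0 < c * (z + x₀) →
      HasDerivAt (fun z => (c * (z + x₀)) ^ p) (p * (c * (z + x₀)) ^ (p - 1) * c) z :=
    fun p z hz => by
      have := (Real.hasDerivAt_rpow_const (p := p) (Or.inl hz.ne')).comp z (hwD z); exact this
  have htD : ∀ z : ℝ, 0 < c * (z + x₀) →
      HasDerivAt t ((1:ℝ)/4 * (c * (z + x₀)) ^ ((1:ℝ)/4 - 1) * c) z := by
    intro z hz
    have hfun : t = fun z => -m + (c * (z + x₀)) ^ ((1:ℝ)/4) := funext htdef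
    rw [hfun]
    exact (hrpow ((1:ℝ)/4) z hz).const_add (-m)
  have hvtD : ∀ z : ℝ, 0 < c * (z + x₀) →
      HasDerivAt (fun z => v (t z))
        (deriv v (t z) * ((1:ℝ)/4 * (c * (z + x₀)) ^ ((1:ℝ)/4 - 1) * c)) z :=
    fun z hz => (hv (t z)).hasDerivAt.comp z (htD z hz)
  have hdvtD : ∀ z : ℝ, 0 < c * (z + x₀) →
      HasDerivAt (fun z => deriv v (t z))
        (deriv (deriv v) (t z) * ((1:ℝ)/4 * (c * (z + x₀)) ^ ((1:ℝ)/4 - 1) * c)) z :=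
    fun z hz => (hv' (t z)).hasDerivAt.comp z (htD z hz)
  have huD : ∀ z : ℝ, 0 < c * (z + x₀) →
      HasDerivAt u
        ((-(3:ℝ)/8 * (c * (z + x₀)) ^ (-(3:ℝ)/8 - 1) * c) * v (t z)
          + (c * (z + x₀)) ^ (-(3:ℝ)/8) *
            (deriv v (t z) * ((1:ℝ)/4 * (c * (z + x₀)) ^ ((1:ℝ)/4 - 1) * c))) z := by
    intro z hz
    have hufun : u = fun z => (c * (z + x₀)) ^ (-(3:ℝ)/8) * v (t z) := funext hudef
    rw [hufun]
    exact (hrpow (-(3:ℝ)/8) z hz).mul (hvtD z hz)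
  intro x hx
  have h1 : m ^ 4 < c * (x + x₀) := by
    have : m ^ 4 / c < x + x₀ := by
      have := hx.1; rw [ha] at this; linarith
    have := (div_lt_iff₀ hc).mp this; linarith
  have h2 : c * (x + x₀) < (Real.pi + m) ^ 4 := by
    have : x + x₀ < (Real.pi + m) ^ 4 / c := by
      have := hx.2; rw [hb] at this; linarith
    have := (lt_div_iff₀ hc).mp this; linarith
  have hx' : 0 < c * (x + x₀) := lt_trans (by positivity) h1
  have hY : 0 < x + x₀ := by
    rcases mul_pos_iff.mp hx' with ⟨_, h⟩ | ⟨h, _⟩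
    · exact h
    · linarith
  -- t x ∈ Ioo 0 π
  have htlo : m < (c * (x + x₀)) ^ ((1:ℝ)/4) := by
    have := Real.rpow_lt_rpow (by positivity) h1 (by norm_num : (0:ℝ) < 1/4)
    rwa [hm4] at this
  have hthi : (c * (x + x₀)) ^ ((1:ℝ)/4) < Real.pi + m := by
    have := Real.rpow_lt_rpow hx'.le h2 (by norm_num : (0:ℝ) < 1/4)
    rwa [hπm4] at this
  have htmem : t x ∈ Set.Ioo 0 Real.pi := by
    rw [htdef]; constructor <;> [linarith; linarith]
  have htx : t x + m = (c * (x + x₀)) ^ ((1:ℝ)/4) := by rw [htdef]; ring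
  have hode : deriv (deriv v) (t x)
      = 3 / (4 * (t x + m) ^ 2) * v (t x) - lam * v (t x) := by
    have := heq (t x) htmem; linarith
  -- second derivative of each piece of the first derivative
  have hgD : HasDerivAt (fun z => 8 * Real.sqrt r₀ * (z + x₀) ^ ((3:ℝ)/2))
      (8 * Real.sqrt r₀ * ((3:ℝ)/2 * (x + x₀) ^ ((3:ℝ)/2 - 1) * 1)) x := by
    exact ((Real.hasDerivAt_rpow_const (Or.inl hY.ne')).comp x
      ((hasDerivAt_id x).add_const x₀)).const_mul (8 * Real.sqrt r₀)
  have hq1 : HasDerivAt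
      (fun z => (-(3:ℝ)/8 * (c * (z + x₀)) ^ (-(3:ℝ)/8 - 1) * c) * v (t z))
      (((-(3:ℝ)/8 - 1) * (c * (x + x₀)) ^ (-(3:ℝ)/8 - 1 - 1) * c * (-(3:ℝ)/8) * c) * v (t x)
        + (-(3:ℝ)/8 * (c * (x + x₀)) ^ (-(3:ℝ)/8 - 1) * c) *
          (deriv v (t x) * ((1:ℝ)/4 * (c * (x + x₀)) ^ ((1:ℝ)/4 - 1) * c))) x := by
    have hbase := ((hrpow (-(3:ℝ)/8 - 1) x hx').const_mul (-(3:ℝ)/8)).mul_const c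
    have := hbase.mul (hvtD x hx')
    exact this.congr_deriv (by ring)
  have hq2 : HasDerivAt
      (fun z => (c * (z + x₀)) ^ (-(3:ℝ)/8) *
        (deriv v (t z) * ((1:ℝ)/4 * (c * (z + x₀)) ^ ((1:ℝ)/4 - 1) * c)))
      ((-(3:ℝ)/8 * (c * (x + x₀)) ^ (-(3:ℝ)/8 - 1) * c) *
          (deriv v (t x) * ((1:ℝ)/4 * (c * (x + x₀)) ^ ((1:ℝ)/4 - 1) * c))
        + (c * (x + x₀)) ^ (-(3:ℝ)/8) *
          ((deriv (deriv v) (t x) * ((1:ℝ)/4 * (c * (x + x₀)) ^ ((1:ℝ)/4 - 1) * c)) *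
              ((1:ℝ)/4 * (c * (x + x₀)) ^ ((1:ℝ)/4 - 1) * c)
            + deriv v (t x) *
              (((1:ℝ)/4 - 1) * (c * (x + x₀)) ^ ((1:ℝ)/4 - 1 - 1) * c * ((1:ℝ)/4) * c))) x := by
    have hinner := ((hrpow ((1:ℝ)/4 - 1) x hx').const_mul ((1:ℝ)/4)).mul_const c
    have := (hrpow (-(3:ℝ)/8) x hx').mul ((hdvtD x hx').mul hinner)
    exact this.congr_deriv (by simp only [Pi.mul_apply]; ring)
  have hGD := hgD.mul (hq1.add hq2)
  have hEq : (fun z => 8 * Real.sqrt r₀ * (z + x₀) ^ ((3:ℝ)/2) * deriv u z)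
      =ᶠ[nhds x] (fun z => 8 * Real.sqrt r₀ * (z + x₀) ^ ((3:ℝ)/2) *
        ((-(3:ℝ)/8 * (c * (z + x₀)) ^ (-(3:ℝ)/8 - 1) * c) * v (t z)
          + (c * (z + x₀)) ^ (-(3:ℝ)/8) *
            (deriv v (t z) * ((1:ℝ)/4 * (c * (z + x₀)) ^ ((1:ℝ)/4 - 1) * c)))) := by
    have hSopen : IsOpen {z : ℝ | 0 < c * (z + x₀)} := by
      have : Continuous fun z : ℝ => c * (z + x₀) :=
        continuous_const.mul (continuous_id.add continuous_const)
      exact isOpen_lt continuous_const this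
    filter_upwards [hSopen.mem_nhds hx'] with z hz
    rw [(huD z hz).deriv]
  simp only [Pi.mul_def, Pi.add_def] at hGD
  rw [hEq.deriv_eq, hGD.deriv, hudef x, hode, htx]
  -- algebra
  set κ := c ^ ((1:ℝ)/8) with hκdef
  set sY := (x + x₀) ^ ((1:ℝ)/8) with hsYdef
  have hκ : 0 < κ := Real.rpow_pos_of_pos hc _
  have hsY : 0 < sY := Real.rpow_pos_of_pos hY _
  have hW8 : ∀ n : ℤ, (c * (x + x₀)) ^ ((n:ℝ)/8) = (κ * sY) ^ n := by
    intro n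
    rw [hκdef, hsYdef, ← Real.mul_rpow hc.le hY.le,
      ← Real.rpow_intCast ((c * (x + x₀)) ^ ((1:ℝ)/8)) n,
      ← Real.rpow_mul (by positivity)]
    ring_nf
  have hY8 : ∀ n : ℤ, (x + x₀) ^ ((n:ℝ)/8) = sY ^ n := by
    intro n
    rw [hsYdef, ← Real.rpow_intCast ((x + x₀) ^ ((1:ℝ)/8)) n, ← Real.rpow_mul hY.le]
    ring_nf
  have hcκ : c = κ ^ (8:ℕ) := by
    rw [hκdef, ← Real.rpow_natCast (c ^ ((1:ℝ)/8)) 8, ← Real.rpow_mul hc.le]; norm_num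
  have hrκ : r₀ = κ ^ (8:ℕ) / 4 := by rw [← hcκ, hcdef]; ring
  have hsr : Real.sqrt r₀ = κ ^ (4:ℕ) / 2 := by
    rw [show r₀ = (κ ^ (4:ℕ) / 2) ^ 2 by rw [hrκ]; ring]
    exact Real.sqrt_sq (by positivity)
  have e1 : (c * (x + x₀)) ^ (-(3:ℝ)/8 - 1 - 1) = (κ * sY) ^ (-19:ℤ) := by
    rw [show -(3:ℝ)/8 - 1 - 1 = ((-19:ℤ):ℝ)/8 by norm_num]; exact hW8 _
  have e2 : (c * (x + x₀)) ^ (-(3:ℝ)/8 - 1) = (κ * sY) ^ (-11:ℤ) := by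
    rw [show -(3:ℝ)/8 - 1 = ((-11:ℤ):ℝ)/8 by norm_num]; exact hW8 _
  have e3 : (c * (x + x₀)) ^ (-(3:ℝ)/8) = (κ * sY) ^ (-3:ℤ) := by
    rw [show -(3:ℝ)/8 = ((-3:ℤ):ℝ)/8 by norm_num]; exact hW8 _
  have e4 : (c * (x + x₀)) ^ ((1:ℝ)/4 - 1 - 1) = (κ * sY) ^ (-14:ℤ) := by
    rw [show (1:ℝ)/4 - 1 - 1 = ((-14:ℤ):ℝ)/8 by norm_num]; exact hW8 _
  have e5 : (c * (x + x₀)) ^ ((1:ℝ)/4 - 1) = (κ * sY) ^ (-6:ℤ) := by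
    rw [show (1:ℝ)/4 - 1 = ((-6:ℤ):ℝ)/8 by norm_num]; exact hW8 _
  have e6 : (c * (x + x₀)) ^ ((1:ℝ)/4) = (κ * sY) ^ (2:ℤ) := by
    rw [show (1:ℝ)/4 = ((2:ℤ):ℝ)/8 by norm_num]; exact hW8 _
  have e7 : (x + x₀) ^ ((3:ℝ)/2) = sY ^ (12:ℤ) := by
    rw [show (3:ℝ)/2 = ((12:ℤ):ℝ)/8 by norm_num]; exact hY8 _
  have e8 : (x + x₀) ^ ((3:ℝ)/2 - 1) = sY ^ (4:ℤ) := by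
    rw [show (3:ℝ)/2 - 1 = ((4:ℤ):ℝ)/8 by norm_num]; exact hY8 _
  rw [e1, e2, e3, e4, e5, e6, e7, e8, hsr, hrκ, hcκ]
  have hκsY : (0:ℝ) < κ * sY := by positivity
  simp only [show (-19:ℤ) = -(19:ℕ) by norm_num, show (-11:ℤ) = -(11:ℕ) by norm_num,
    show (-3:ℤ) = -(3:ℕ) by norm_num, show (-14:ℤ) = -(14:ℕ) by norm_num,
    show (-6:ℤ) = -(6:ℕ) by norm_num, show (2:ℤ) = ((2:ℕ):ℤ) by norm_num,
    show (12:ℤ) = ((12:ℕ):ℤ) by norm_num, show (4:ℤ) = ((4:ℕ):ℤ) by norm_num,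
    zpow_neg, zpow_natCast]
  field_simp
  ring
end

section
/- Let k = 3/4, m > 0, r₀ > 0, x₀ ∈ ℝ, λ ∈ ℝ. Set a = −x₀ + (ln m)/r₀ and b = −x₀ + (ln(π+m))/r₀, define t(x) = −m + e^(r₀(x+x₀)), and suppose v : ℝ → ℝ is twice differentiable and satisfies −v''(t) + (3/(4(t+m)²))·v(t) = λ·v(t) for all t ∈ (0,π), with v(0) = 0 = v(π). Then u(x) = e^(r₀(x+x₀)/2)·v(t(x)) satisfies −(d/dx)((1/r₀)·e^(−2r₀(x+x₀))·u'(x)) = λ·r₀·u(x) for all x ∈ (a,b), and u(a) = 0 = u(b). -/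
/-- for `k = 3/4` (root `ρ₂ = −1/2`), the second PdHA problem
transforms to the canonical form `−((1/r₀)·e^(−2r₀(x+x₀))·u')' = λ·r₀·u`
with Dirichlet boundary conditions. -/
theorem stmt11 (m r₀ x₀ lam : ℝ) (hm : 0 < m) (hr : 0 < r₀)
    (a b : ℝ)
    (ha : a = -x₀ + Real.log m / r₀)
    (hb : b = -x₀ + Real.log (Real.pi + m) / r₀)
    (v : ℝ → ℝ)
    (hv : ∀ s, DifferentiableAt ℝ v s) (hv' : ∀ s, DifferentiableAt ℝ (deriv v) s)
    (heq : ∀ s ∈ Set.Ioo 0 Real.pi,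
      -deriv (deriv v) s + (3 / (4 * (s + m) ^ 2)) * v s = lam * v s)
    (hv0 : v 0 = 0) (hvπ : v Real.pi = 0)
    (t u : ℝ → ℝ)
    (htdef : ∀ x, t x = -m + Real.exp (r₀ * (x + x₀)))
    (hudef : ∀ x, u x = Real.exp (r₀ * (x + x₀) / 2) * v (t x)) :
    (∀ x ∈ Set.Ioo a b,
      -deriv (fun z => (1 / r₀) * Real.exp (-2 * r₀ * (z + x₀)) * deriv u z) x
        = lam * r₀ * u x) ∧
    u a = 0 ∧ u b = 0 := by
  have hr0 : r₀ ≠ 0 := ne_of_gt hr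
  have hlin : ∀ z : ℝ, HasDerivAt (fun z : ℝ => r₀ * (z + x₀)) r₀ z := by
    intro z
    simpa using ((hasDerivAt_id z).add_const x₀).const_mul r₀
  have hE : ∀ z : ℝ, HasDerivAt (fun z : ℝ => Real.exp (r₀ * (z + x₀)))
      (r₀ * Real.exp (r₀ * (z + x₀))) z := by
    intro z
    simpa [mul_comm] using (hlin z).exp
  have ht : ∀ z : ℝ, HasDerivAt t (r₀ * Real.exp (r₀ * (z + x₀))) z := by
    intro z
    have : t = fun z => -m + Real.exp (r₀ * (z + x₀)) := funext htdef
    rw [this]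
    exact (hE z).const_add (-m)
  have hA : ∀ z : ℝ, HasDerivAt (fun z : ℝ => Real.exp (r₀ * (z + x₀) / 2))
      (r₀ / 2 * Real.exp (r₀ * (z + x₀) / 2)) z := by
    intro z
    have h1 : HasDerivAt (fun z : ℝ => r₀ * (z + x₀) / 2) (r₀ / 2) z := (hlin z).div_const 2
    simpa [mul_comm] using h1.exp
  have hU : ∀ z : ℝ, HasDerivAt u
      (r₀ / 2 * Real.exp (r₀ * (z + x₀) / 2) * v (t z)
        + Real.exp (r₀ * (z + x₀) / 2) * (deriv v (t z) * (r₀ * Real.exp (r₀ * (z + x₀))))) z := by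
    intro z
    have hvt : HasDerivAt (fun z => v (t z)) (deriv v (t z) * (r₀ * Real.exp (r₀ * (z + x₀)))) z :=
      ((hv (t z)).hasDerivAt).comp z (ht z)
    have h := (hA z).mul hvt
    have hu : u = fun z => Real.exp (r₀ * (z + x₀) / 2) * v (t z) := funext hudef
    rw [hu]
    exact h
  have hderivu : deriv u = fun z =>
      r₀ / 2 * Real.exp (r₀ * (z + x₀) / 2) * v (t z)
        + Real.exp (r₀ * (z + x₀) / 2) * (deriv v (t z) * (r₀ * Real.exp (r₀ * (z + x₀)))) :=
    funext fun z => (hU z).deriv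
  refine ⟨?_, ?_, ?_⟩
  · intro x hx
    obtain ⟨hx1, hx2⟩ := hx
    have htm : t x + m = Real.exp (r₀ * (x + x₀)) := by rw [htdef]; ring
    have htx : t x ∈ Set.Ioo 0 Real.pi := by
      rw [htdef]
      constructor
      · have hlt : Real.log m < r₀ * (x + x₀) := by
          rw [ha] at hx1
          have h1 : Real.log m / r₀ < x + x₀ := by linarith
          calc Real.log m = r₀ * (Real.log m / r₀) := by field_simp
            _ < r₀ * (x + x₀) := mul_lt_mul_of_pos_left h1 hr
        nlinarith [Real.exp_log hm, Real.exp_lt_exp.mpr hlt]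
      · have hπm : (0:ℝ) < Real.pi + m := by positivity
        have hlt : r₀ * (x + x₀) < Real.log (Real.pi + m) := by
          rw [hb] at hx2
          have h1 : x + x₀ < Real.log (Real.pi + m) / r₀ := by linarith
          calc r₀ * (x + x₀) < r₀ * (Real.log (Real.pi + m) / r₀) :=
                mul_lt_mul_of_pos_left h1 hr
            _ = Real.log (Real.pi + m) := by field_simp
        nlinarith [Real.exp_log hπm, Real.exp_lt_exp.mpr hlt]
    have hW' : deriv (deriv v) (t x)
        = 3 / (4 * (t x + m) ^ 2) * v (t x) - lam * v (t x) := by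
      have := heq (t x) htx
      linarith
    -- derivative of the flux function
    have hP : HasDerivAt (fun z : ℝ => Real.exp (-2 * r₀ * (z + x₀)))
        (-2 * r₀ * Real.exp (-2 * r₀ * (x + x₀))) x := by
      have h1 : HasDerivAt (fun z : ℝ => -2 * r₀ * (z + x₀)) (-2 * r₀) x := by
        simpa using ((hasDerivAt_id x).add_const x₀).const_mul (-2 * r₀)
      simpa [mul_comm] using h1.exp
    have hw : HasDerivAt (fun z => deriv v (t z))
        (deriv (deriv v) (t x) * (r₀ * Real.exp (r₀ * (x + x₀)))) x :=
      ((hv' (t x)).hasDerivAt).comp x (ht x)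
    have hvt : HasDerivAt (fun z => v (t z))
        (deriv v (t x) * (r₀ * Real.exp (r₀ * (x + x₀)))) x :=
      ((hv (t x)).hasDerivAt).comp x (ht x)
    have hE' : HasDerivAt (fun z : ℝ => r₀ * Real.exp (r₀ * (z + x₀)))
        (r₀ * (r₀ * Real.exp (r₀ * (x + x₀)))) x := (hE x).const_mul r₀
    have h2 := hw.mul hE'
    have hExpr := ((((hA x).const_mul (r₀/2)).mul hvt)).add ((hA x).mul h2)
    have hflux := (hP.mul hExpr).const_mul (1 / r₀)
    have hfeq : (fun z => (1 / r₀) * Real.exp (-2 * r₀ * (z + x₀)) * deriv u z)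
        = (fun z => (1 / r₀) * (Real.exp (-2 * r₀ * (z + x₀)) *
            ((r₀ / 2 * Real.exp (r₀ * (z + x₀) / 2)) * v (t z)
              + Real.exp (r₀ * (z + x₀) / 2)
                * (deriv v (t z) * (r₀ * Real.exp (r₀ * (z + x₀))))))) := by
      funext z
      rw [hderivu]
      ring
    rw [hfeq]
    have hd : deriv (fun z => (1 / r₀) * (Real.exp (-2 * r₀ * (z + x₀)) *
            ((r₀ / 2 * Real.exp (r₀ * (z + x₀) / 2)) * v (t z)
              + Real.exp (r₀ * (z + x₀) / 2)
                * (deriv v (t z) * (r₀ * Real.exp (r₀ * (z + x₀))))))) x = _ := hflux.deriv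
    rw [hd, hW', htm, hudef x]
    simp only [Pi.mul_apply, Pi.add_apply]
    have hAE : Real.exp (r₀ * (x + x₀))
        = Real.exp (r₀ * (x + x₀) / 2) * Real.exp (r₀ * (x + x₀) / 2) := by
      rw [← Real.exp_add]; congr 1; ring
    have hPA : Real.exp (-2 * r₀ * (x + x₀))
        = 1 / (Real.exp (r₀ * (x + x₀) / 2)) ^ 4 := by
      rw [eq_div_iff (by positivity)]
      have : Real.exp (-2 * r₀ * (x + x₀)) * Real.exp (r₀ * (x + x₀) / 2) ^ 4
          = Real.exp (-2 * r₀ * (x + x₀) + (r₀ * (x + x₀) / 2 + (r₀ * (x + x₀) / 2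
              + (r₀ * (x + x₀) / 2 + r₀ * (x + x₀) / 2)))) := by
        rw [Real.exp_add, Real.exp_add, Real.exp_add, Real.exp_add]
        ring
      rw [this]
      rw [show -2 * r₀ * (x + x₀) + (r₀ * (x + x₀) / 2 + (r₀ * (x + x₀) / 2
              + (r₀ * (x + x₀) / 2 + r₀ * (x + x₀) / 2))) = 0 by ring]
      exact Real.exp_zero
    rw [hPA, hAE]
    have hAne : Real.exp (r₀ * (x + x₀) / 2) ≠ 0 := Real.exp_ne_zero _
    field_simp
    ring
  · have hta : t a = 0 := by
      rw [htdef, ha]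
      have h1 : r₀ * (-x₀ + Real.log m / r₀ + x₀) = Real.log m := by field_simp; ring
      rw [h1, Real.exp_log hm]; ring
    rw [hudef, hta, hv0, mul_zero]
  · have htb : t b = Real.pi := by
      rw [htdef, hb]
      have h1 : r₀ * (-x₀ + Real.log (Real.pi + m) / r₀ + x₀) = Real.log (Real.pi + m) := by
        field_simp
        ring
      rw [h1, Real.exp_log (by positivity)]; ring
    rw [hudef, htb, hvπ, mul_zero]
end

section
/- Let k > 0, m > 0, x₀ ∈ ℝ, λ ∈ ℝ, and let q₀ = (1+4k)/4, so that 1 + 4k = 4q₀. Set a = −x₀ + ln m and b = −x₀ + ln(π+m), and define t(x) = e^(x+x₀) − m. Suppose v : ℝ → ℝ is twice differentiable and satisfies −v''(t) + (k/(t+m)²)·v(t) = λ·v(t) for all t ∈ (0,π), with v(0) = 0 = v(π). Then u(x) = e^(−(x+x₀)/2)·v(t(x)) satisfies −u''(x) + q₀·u(x) = λ·e^(2(x+x₀))·u(x) for all x ∈ (a,b), and u(a) = 0 = u(b). -/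
/-- equal-roots case A1 (`1 + 4k = 4q₀`, solution `ω̄₁(τ) = √τ`):
the second PdHA problem transforms to `−u'' + q₀·u = λ·e^(2(x+x₀))·u`
with Dirichlet boundary conditions. -/
theorem stmt12 (k m x₀ lam q₀ : ℝ) (hk : 0 < k) (hm : 0 < m)
    (hq : q₀ = (1 + 4 * k) / 4)
    (a b : ℝ)
    (ha : a = -x₀ + Real.log m) (hb : b = -x₀ + Real.log (Real.pi + m))
    (t : ℝ → ℝ) (htdef : ∀ x, t x = Real.exp (x + x₀) - m)
    (v : ℝ → ℝ)
    (hv : ∀ s, DifferentiableAt ℝ v s) (hv' : ∀ s, DifferentiableAt ℝ (deriv v) s)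
    (heq : ∀ s ∈ Set.Ioo 0 Real.pi,
      -deriv (deriv v) s + (k / (s + m) ^ 2) * v s = lam * v s)
    (hv0 : v 0 = 0) (hvπ : v Real.pi = 0)
    (u : ℝ → ℝ) (hudef : ∀ x, u x = Real.exp (-(x + x₀) / 2) * v (t x)) :
    (∀ x ∈ Set.Ioo a b,
      -deriv (deriv u) x + q₀ * u x = lam * Real.exp (2 * (x + x₀)) * u x) ∧
    u a = 0 ∧ u b = 0 := by
  have hu : u = fun x => Real.exp (-(x + x₀) / 2) * v (Real.exp (x + x₀) - m) := by
    funext x; rw [hudef x, htdef x]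
  have hE : ∀ x : ℝ, HasDerivAt (fun y => Real.exp (y + x₀)) (Real.exp (x + x₀)) x := by
    intro x
    simpa [Function.comp_def] using (Real.hasDerivAt_exp (x + x₀)).comp x ((hasDerivAt_id x).add_const x₀)
  have hEhalf : ∀ x : ℝ, HasDerivAt (fun y => Real.exp (-(y + x₀) / 2))
      (-(1/2) * Real.exp (-(x + x₀) / 2)) x := by
    intro x
    have h1 : HasDerivAt (fun y : ℝ => -(y + x₀) / 2) ((-1 : ℝ)/2) x := by
      have hfn : (fun y : ℝ => -(y + x₀) / 2) = fun y => (-(1:ℝ)/2) * y + (-x₀/2) := by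
        funext y; ring
      rw [hfn]
      simpa using ((hasDerivAt_id x).const_mul (-(1:ℝ)/2)).add_const (-x₀/2)
    simpa [Function.comp_def, mul_comm, neg_div, neg_mul] using (Real.hasDerivAt_exp (-(x + x₀) / 2)).comp x h1
  have hvt : ∀ x : ℝ, HasDerivAt (fun y => v (Real.exp (y + x₀) - m))
      (deriv v (Real.exp (x + x₀) - m) * Real.exp (x + x₀)) x := fun x =>
    (hv _).hasDerivAt.comp x ((hE x).sub_const m)
  have hu1 : ∀ x : ℝ, HasDerivAt u (Real.exp (-(x + x₀) / 2) *
      (-(1/2) * v (Real.exp (x + x₀) - m)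
        + Real.exp (x + x₀) * deriv v (Real.exp (x + x₀) - m))) x := by
    intro x
    have h := (hEhalf x).mul (hvt x)
    rw [hu]
    exact h.congr_deriv (by ring)
  have hderivu : deriv u = fun x => Real.exp (-(x + x₀) / 2) *
      (-(1/2) * v (Real.exp (x + x₀) - m)
        + Real.exp (x + x₀) * deriv v (Real.exp (x + x₀) - m)) := by
    funext x; exact (hu1 x).deriv
  have hu2 : ∀ x : ℝ, HasDerivAt (deriv u) (Real.exp (-(x + x₀) / 2) *
      ((1/4) * v (Real.exp (x + x₀) - m)
        + Real.exp (x + x₀) ^ 2 * deriv (deriv v) (Real.exp (x + x₀) - m))) x := by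
    intro x
    have hvt' : HasDerivAt (fun y => deriv v (Real.exp (y + x₀) - m))
        (deriv (deriv v) (Real.exp (x + x₀) - m) * Real.exp (x + x₀)) x :=
      (hv' _).hasDerivAt.comp x ((hE x).sub_const m)
    have hinner : HasDerivAt (fun y => -(1/2) * v (Real.exp (y + x₀) - m)
        + Real.exp (y + x₀) * deriv v (Real.exp (y + x₀) - m))
        (-(1/2) * (deriv v (Real.exp (x + x₀) - m) * Real.exp (x + x₀))
          + (Real.exp (x + x₀) * deriv v (Real.exp (x + x₀) - m)
            + Real.exp (x + x₀) * (deriv (deriv v) (Real.exp (x + x₀) - m) * Real.exp (x + x₀)))) x :=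
      ((hvt x).const_mul (-(1/2))).add ((hE x).mul hvt')
    have h := (hEhalf x).mul hinner
    rw [hderivu]
    exact h.congr_deriv (by ring)
  refine ⟨?_, ?_, ?_⟩
  · intro x hx
    have hx1 : Real.log m < x + x₀ := by rw [ha] at hx; linarith [hx.1]
    have hx2 : x + x₀ < Real.log (Real.pi + m) := by rw [hb] at hx; linarith [hx.2]
    have hE1 : m < Real.exp (x + x₀) := by
      calc m = Real.exp (Real.log m) := (Real.exp_log hm).symm
        _ < Real.exp (x + x₀) := Real.exp_lt_exp.mpr hx1
    have hE2 : Real.exp (x + x₀) < Real.pi + m := by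
      calc Real.exp (x + x₀) < Real.exp (Real.log (Real.pi + m)) := Real.exp_lt_exp.mpr hx2
        _ = Real.pi + m := Real.exp_log (by positivity)
    set s := Real.exp (x + x₀) - m with hs
    have hsI : s ∈ Set.Ioo 0 Real.pi := ⟨by simp [hs]; linarith, by simp [hs]; linarith⟩
    have hkey := heq s hsI
    have hsm : s + m = Real.exp (x + x₀) := by rw [hs]; ring
    have hdd : deriv (deriv u) x = Real.exp (-(x + x₀) / 2) *
        ((1/4) * v s + Real.exp (x + x₀) ^ 2 * deriv (deriv v) s) := (hu2 x).deriv
    have hdv : deriv (deriv v) s = (k / (s + m) ^ 2) * v s - lam * v s := by linarith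
    have h2 : Real.exp (2 * (x + x₀)) = Real.exp (x + x₀) ^ 2 := by
      rw [two_mul, Real.exp_add, sq]
    have hEne : Real.exp (x + x₀) ≠ 0 := (Real.exp_pos _).ne'
    rw [hdd, hudef x, htdef x, ← hs, hdv, hsm, hq, h2]
    field_simp
    ring
  · rw [hudef a, htdef a]
    have : a + x₀ = Real.log m := by rw [ha]; ring
    rw [this, Real.exp_log hm]
    simp [hv0]
  · rw [hudef b, htdef b]
    have : b + x₀ = Real.log (Real.pi + m) := by rw [hb]; ring
    rw [this, Real.exp_log (by positivity)]
    simp [hvπ]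
end

section
/- Let k > 0, m > 1, x₀ ∈ ℝ, λ ∈ ℝ, and let q₀ = (1+4k)/4. Set a = −x₀ + (ln m)³/3 and b = −x₀ + (ln(π+m))³/3, write c(x) = (3(x+x₀))^(1/3) (real cube root, which is positive on (a,b) since m > 1), and define t(x) = e^(c(x)) − m. Suppose v : ℝ → ℝ is twice differentiable and satisfies −v''(t) + (k/(t+m)²)·v(t) = λ·v(t) for all t ∈ (0,π), with v(0) = 0 = v(π). Then u(x) = c(x)^(−1)·e^(−c(x)/2)·v(t(x)) satisfies −(d/dx)(c(x)⁴·u'(x)) + q₀·u(x) = λ·e^(2c(x))·u(x) for all x ∈ (a,b), and u(a) = 0 = u(b). -/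
set_option maxHeartbeats 1600000

/-- equal-roots case A2 (`1 + 4k = 4q₀`, solution
`ω̄₂(τ) = √τ·ln τ`): the second PdHA problem transforms to
`−(c(x)⁴·u')' + q₀·u = λ·e^(2c(x))·u` where `c(x) = (3(x+x₀))^(1/3)`,
with Dirichlet boundary conditions. -/
theorem stmt13 (k m x₀ lam q₀ : ℝ) (hk : 0 < k) (hm : 1 < m)
    (hq : q₀ = (1 + 4 * k) / 4)
    (a b : ℝ)
    (ha : a = -x₀ + (Real.log m) ^ 3 / 3)
    (hb : b = -x₀ + (Real.log (Real.pi + m)) ^ 3 / 3)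
    (c : ℝ → ℝ) (hcdef : ∀ x, c x = (3 * (x + x₀)) ^ ((1 : ℝ) / 3))
    (t : ℝ → ℝ) (htdef : ∀ x, t x = Real.exp (c x) - m)
    (v : ℝ → ℝ)
    (hv : ∀ s, DifferentiableAt ℝ v s) (hv' : ∀ s, DifferentiableAt ℝ (deriv v) s)
    (heq : ∀ s ∈ Set.Ioo 0 Real.pi,
      -deriv (deriv v) s + (k / (s + m) ^ 2) * v s = lam * v s)
    (hv0 : v 0 = 0) (hvπ : v Real.pi = 0)
    (u : ℝ → ℝ)
    (hudef : ∀ x, u x = (c x)⁻¹ * Real.exp (-c x / 2) * v (t x)) :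
    (∀ x ∈ Set.Ioo a b, 0 < c x) ∧
    (∀ x ∈ Set.Ioo a b,
      -deriv (fun z => c z ^ 4 * deriv u z) x + q₀ * u x
        = lam * Real.exp (2 * c x) * u x) ∧
    u a = 0 ∧ u b = 0 := by
  have hm0 : (0:ℝ) < m := lt_trans one_pos hm
  have hπ : 0 < Real.pi := Real.pi_pos
  have hL : 0 < Real.log m := Real.log_pos hm
  have hM0 : (0:ℝ) < Real.pi + m := by linarith
  have hLM : Real.log m < Real.log (Real.pi + m) := Real.log_lt_log hm0 (by linarith)
  have hMpos : 0 < Real.log (Real.pi + m) := lt_trans hL hLM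
  have haL : 3 * (a + x₀) = (Real.log m) ^ 3 := by rw [ha]; ring
  have hbM : 3 * (b + x₀) = (Real.log (Real.pi + m)) ^ 3 := by rw [hb]; ring
  have hS : ∀ x ∈ Set.Ioo a b, 0 < 3 * (x + x₀) := by
    intro x hx
    have h1 := hx.1
    have h2 : (0:ℝ) < (Real.log m) ^ 3 := pow_pos hL 3
    nlinarith
  have hcpos : ∀ x, 0 < 3 * (x + x₀) → 0 < c x := by
    intro x hp; rw [hcdef]; exact Real.rpow_pos_of_pos hp _
  have hc3 : ∀ x, 0 < 3 * (x + x₀) → (c x) ^ 3 = 3 * (x + x₀) := by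
    intro x hp
    rw [hcdef, ← Real.rpow_natCast ((3 * (x + x₀)) ^ ((1:ℝ)/3)) 3,
      ← Real.rpow_mul hp.le]
    norm_num
  have hcd : ∀ x, 0 < 3 * (x + x₀) → HasDerivAt c (((c x) ^ 2)⁻¹) x := by
    intro x hp
    have h1 : HasDerivAt (fun z : ℝ => 3 * (z + x₀)) 3 x := by
      simpa using ((hasDerivAt_id x).add_const x₀).const_mul 3
    have h2 := (Real.hasDerivAt_rpow_const (x := 3 * (x + x₀)) (p := (1:ℝ)/3)
      (Or.inl hp.ne')).comp x h1
    have hfun : (fun z => (3 * (z + x₀)) ^ ((1:ℝ)/3)) = c := by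
      funext z; rw [hcdef]
    have hc2 : (c x) ^ 2 = (3 * (x + x₀)) ^ ((2:ℝ)/3) := by
      rw [hcdef, ← Real.rpow_natCast ((3 * (x + x₀)) ^ ((1:ℝ)/3)) 2,
        ← Real.rpow_mul hp.le]
      norm_num
    have hval : (1:ℝ)/3 * (3 * (x + x₀)) ^ ((1:ℝ)/3 - 1) * 3 = ((c x) ^ 2)⁻¹ := by
      rw [hc2, ← Real.rpow_neg hp.le]
      have : (1:ℝ)/3 - 1 = -((2:ℝ)/3) := by norm_num
      rw [this]; ring
    have h3 : HasDerivAt (fun z => (3 * (z + x₀)) ^ ((1:ℝ)/3)) (((c x) ^ 2)⁻¹) x := by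
      rw [← hval]; exact h2
    rwa [hfun] at h3
  have htd : ∀ x, 0 < 3 * (x + x₀) →
      HasDerivAt t (Real.exp (c x) * ((c x) ^ 2)⁻¹) x := by
    intro x hp
    have h1 := ((hcd x hp).exp).sub_const m
    have hfun : (fun z => Real.exp (c z) - m) = t := by
      funext z; rw [htdef]
    rwa [hfun] at h1
  -- key formula for c^4 * u'
  have key : ∀ x, 0 < 3 * (x + x₀) → c x ^ 4 * deriv u x
      = Real.exp (-c x / 2) *
        (-(1 + c x / 2) * v (t x) + c x * Real.exp (c x) * deriv v (t x)) := by
    intro x hp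
    have hc := hcd x hp
    have ht := htd x hp
    have hx0 : c x ≠ 0 := (hcpos x hp).ne'
    have h1 : HasDerivAt (fun z => (c z)⁻¹) (-((c x) ^ 2)⁻¹ / (c x) ^ 2) x := hc.inv hx0
    have h2 : HasDerivAt (fun z => Real.exp (-c z / 2))
        (Real.exp (-c x / 2) * (-((c x) ^ 2)⁻¹ / 2)) x := (hc.neg.div_const 2).exp
    have h3 : HasDerivAt (fun z => v (t z))
        (deriv v (t x) * (Real.exp (c x) * ((c x) ^ 2)⁻¹)) x :=
      (hv (t x)).hasDerivAt.comp x ht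
    have hu := (h1.mul h2).mul h3
    have hfun : (fun z => (c z)⁻¹ * Real.exp (-c z / 2) * v (t z)) = u := by
      funext z; rw [hudef]
    simp only [Pi.mul_def] at hu
    rw [hfun] at hu
    rw [hu.deriv]
    field_simp
    ring
  refine ⟨fun x hx => hcpos x (hS x hx), ?_, ?_, ?_⟩
  · intro x hx
    have hp := hS x hx
    have hc := hcd x hp
    have ht := htd x hp
    have hx0 : c x ≠ 0 := (hcpos x hp).ne'
    -- t x ∈ Ioo 0 π
    have hc3x := hc3 x hp
    have hLc : Real.log m < c x := by
      refine lt_of_pow_lt_pow_left₀ 3 (hcpos x hp).le ?_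
      rw [hc3x, ← haL]
      linarith [hx.1]
    have hcM : c x < Real.log (Real.pi + m) := by
      refine lt_of_pow_lt_pow_left₀ 3 hMpos.le ?_
      rw [hc3x, ← hbM]
      linarith [hx.2]
    have htmem : t x ∈ Set.Ioo 0 Real.pi := by
      constructor
      · rw [htdef]
        have h := Real.exp_lt_exp.2 hLc
        rw [Real.exp_log hm0] at h
        linarith
      · rw [htdef]
        have h := Real.exp_lt_exp.2 hcM
        rw [Real.exp_log hM0] at h
        linarith
    -- ODE for v at t x
    have hsm : t x + m = Real.exp (c x) := by rw [htdef]; ring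
    have hvv : deriv (deriv v) (t x) = (k / (Real.exp (c x)) ^ 2 - lam) * v (t x) := by
      have h := heq (t x) htmem
      rw [hsm] at h
      have : k / Real.exp (c x) ^ 2 * v (t x) - lam * v (t x) = deriv (deriv v) (t x) := by
        linarith
      rw [← this]; ring
    -- eventual equality with explicit function
    have hop : IsOpen {z : ℝ | 0 < 3 * (z + x₀)} :=
      isOpen_lt continuous_const (continuous_const.mul (continuous_id.add continuous_const))
    have hgev : (fun z => c z ^ 4 * deriv u z) =ᶠ[nhds x]
        (fun z => Real.exp (-c z / 2) *
          (-(1 + c z / 2) * v (t z) + c z * Real.exp (c z) * deriv v (t z))) := by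
      filter_upwards [hop.mem_nhds hp] with z hz using key z hz
    -- derivative of the explicit function
    have hA : HasDerivAt (fun z => Real.exp (-c z / 2))
        (Real.exp (-c x / 2) * (-((c x) ^ 2)⁻¹ / 2)) x := (hc.neg.div_const 2).exp
    have hB1 : HasDerivAt (fun z => -(1 + c z / 2)) (-(((c x) ^ 2)⁻¹ / 2)) x :=
      ((hc.div_const 2).const_add 1).neg
    have hB2 : HasDerivAt (fun z => v (t z))
        (deriv v (t x) * (Real.exp (c x) * ((c x) ^ 2)⁻¹)) x :=
      (hv (t x)).hasDerivAt.comp x ht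
    have hB3 : HasDerivAt (fun z => c z * Real.exp (c z))
        (((c x) ^ 2)⁻¹ * Real.exp (c x) + c x * (Real.exp (c x) * ((c x) ^ 2)⁻¹)) x :=
      hc.mul hc.exp
    have hB4 : HasDerivAt (fun z => deriv v (t z))
        (deriv (deriv v) (t x) * (Real.exp (c x) * ((c x) ^ 2)⁻¹)) x :=
      (hv' (t x)).hasDerivAt.comp x ht
    have hG := hA.mul ((hB1.mul hB2).add (hB3.mul hB4))
    have hG' := hG.congr_of_eventuallyEq hgev
    simp only [Pi.add_apply, Pi.mul_apply] at hG'
    rw [hG'.deriv, hudef x, hq, hvv]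
    have hE2 : Real.exp (2 * c x) = Real.exp (c x) * Real.exp (c x) := by
      rw [two_mul, Real.exp_add]
    rw [hE2]
    have hEne : Real.exp (c x) ≠ 0 := Real.exp_ne_zero _
    field_simp
    ring
  · have hca : c a = Real.log m := by
      rw [hcdef, haL, ← Real.rpow_natCast (Real.log m) 3, ← Real.rpow_mul hL.le]
      norm_num
    have hta : t a = 0 := by rw [htdef, hca, Real.exp_log hm0]; ring
    rw [hudef, hta, hv0, mul_zero]
  · have hcb : c b = Real.log (Real.pi + m) := by
      rw [hcdef, hbM, ← Real.rpow_natCast (Real.log (Real.pi + m)) 3,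
        ← Real.rpow_mul hMpos.le]
      norm_num
    have htb : t b = Real.pi := by rw [htdef, hcb, Real.exp_log hM0]; ring
    rw [hudef, htb, hvπ, mul_zero]
end

section
/- Let k > 0, m > 0, x₀ ∈ ℝ, λ ∈ ℝ, q₀ ∈ ℝ with 1 + 4k > 4q₀, and let ρ be a real root of ρ² − ρ − (k − q₀) = 0 (so ρ = (1 ± √(1+4(k−q₀)))/2 and 2ρ − 1 = ±√(1+4(k−q₀)) ≠ 0). Set a = −x₀ + m^(2ρ−1)/(2ρ−1) and b = −x₀ + (π+m)^(2ρ−1)/(2ρ−1), and note (2ρ−1)(x+x₀) > 0 for x ∈ (a,b). Define t(x) = −m + ((2ρ−1)(x+x₀))^(1/(2ρ−1)). Suppose v : ℝ → ℝ is twice differentiable and satisfies −v''(t) + (k/(t+m)²)·v(t) = λ·v(t) for all t ∈ (0,π), with v(0) = 0 = v(π). Then u(x) = ((2ρ−1)(x+x₀))^(−ρ/(2ρ−1))·v(t(x)) satisfies −(d/dx)((2ρ−1)²(x+x₀)²·u'(x)) + q₀·u(x) = λ·((2ρ−1)(x+x₀))^(2/(2ρ−1))·u(x) for all x ∈ (a,b),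 and u(a) = 0 = u(b). -/
/-- distinct-real-roots case B (`1 + 4k > 4q₀`): the second PdHA
problem transforms to
`−((2ρ−1)²(x+x₀)²·u')' + q₀·u = λ·((2ρ−1)(x+x₀))^(2/(2ρ−1))·u`
with Dirichlet boundary conditions, `ρ` a real root of `ρ² − ρ − (k−q₀) = 0`. -/
theorem stmt14 (k m x₀ lam q₀ ρ : ℝ) (hk : 0 < k) (hm : 0 < m)
    (hkq : 1 + 4 * k > 4 * q₀) (hρ : ρ ^ 2 - ρ - (k - q₀) = 0)
    (a b : ℝ)
    (ha : a = -x₀ + m ^ (2 * ρ - 1) / (2 * ρ - 1))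
    (hb : b = -x₀ + (Real.pi + m) ^ (2 * ρ - 1) / (2 * ρ - 1))
    (t : ℝ → ℝ)
    (htdef : ∀ x, t x = -m + ((2 * ρ - 1) * (x + x₀)) ^ (1 / (2 * ρ - 1)))
    (v : ℝ → ℝ)
    (hv : ∀ s, DifferentiableAt ℝ v s) (hv' : ∀ s, DifferentiableAt ℝ (deriv v) s)
    (heq : ∀ s ∈ Set.Ioo 0 Real.pi,
      -deriv (deriv v) s + (k / (s + m) ^ 2) * v s = lam * v s)
    (hv0 : v 0 = 0) (hvπ : v Real.pi = 0)
    (u : ℝ → ℝ)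
    (hudef : ∀ x, u x =
      ((2 * ρ - 1) * (x + x₀)) ^ (-ρ / (2 * ρ - 1)) * v (t x)) :
    2 * ρ - 1 ≠ 0 ∧
    (∀ x ∈ Set.Ioo a b, 0 < (2 * ρ - 1) * (x + x₀)) ∧
    (∀ x ∈ Set.Ioo a b,
      -deriv (fun z => (2 * ρ - 1) ^ 2 * (z + x₀) ^ 2 * deriv u z) x + q₀ * u x
        = lam * ((2 * ρ - 1) * (x + x₀)) ^ (2 / (2 * ρ - 1)) * u x) ∧
    u a = 0 ∧ u b = 0 := by
  have hcsq : 0 < (2*ρ-1)^2 := by nlinarith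
  have hc : 2*ρ-1 ≠ 0 := by
    intro h; rw [h] at hcsq; simp at hcsq
  have hmπ : (0:ℝ) < Real.pi + m := by positivity
  have hmc : 0 < m ^ (2*ρ-1) := Real.rpow_pos_of_pos hm _
  have hπc : 0 < (Real.pi+m) ^ (2*ρ-1) := Real.rpow_pos_of_pos hmπ _
  have haw : (2*ρ-1) * (a + x₀) = m ^ (2*ρ-1) := by rw [ha]; field_simp; ring
  have hbw : (2*ρ-1) * (b + x₀) = (Real.pi+m) ^ (2*ρ-1) := by rw [hb]; field_simp; ring
  have hmcc : (m ^ (2*ρ-1)) ^ (1/(2*ρ-1)) = m := by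
    rw [← Real.rpow_mul hm.le, mul_one_div_cancel hc, Real.rpow_one]
  have hπcc : ((Real.pi+m) ^ (2*ρ-1)) ^ (1/(2*ρ-1)) = Real.pi + m := by
    rw [← Real.rpow_mul hmπ.le, mul_one_div_cancel hc, Real.rpow_one]
  have hrange : ∀ x ∈ Set.Ioo a b, 0 < (2*ρ-1)*(x+x₀) ∧ 0 < t x ∧ t x < Real.pi := by
    rintro x ⟨hxa, hxb⟩
    rcases lt_or_gt_of_ne hc with hcneg | hcpos
    · have h1 : (Real.pi+m)^(2*ρ-1) < (2*ρ-1)*(x+x₀) := by nlinarith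
      have h2 : (2*ρ-1)*(x+x₀) < m^(2*ρ-1) := by nlinarith
      have hw : 0 < (2*ρ-1)*(x+x₀) := lt_trans hπc h1
      have hinv : 1/(2*ρ-1) < 0 := one_div_neg.mpr hcneg
      refine ⟨hw, ?_, ?_⟩
      · have := Real.rpow_lt_rpow_of_neg hw h2 hinv
        rw [hmcc] at this
        rw [htdef]; linarith
      · have := Real.rpow_lt_rpow_of_neg hπc h1 hinv
        rw [hπcc] at this
        rw [htdef]; linarith
    · have h1 : m^(2*ρ-1) < (2*ρ-1)*(x+x₀) := by nlinarith
      have h2 : (2*ρ-1)*(x+x₀) < (Real.pi+m)^(2*ρ-1) := by nlinarith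
      have hw : 0 < (2*ρ-1)*(x+x₀) := lt_trans hmc h1
      have hinv : 0 < 1/(2*ρ-1) := by positivity
      refine ⟨hw, ?_, ?_⟩
      · have := Real.rpow_lt_rpow hmc.le h1 hinv
        rw [hmcc] at this
        rw [htdef]; linarith
      · have := Real.rpow_lt_rpow hw.le h2 hinv
        rw [hπcc] at this
        rw [htdef]; linarith
  have hta : t a = 0 := by rw [htdef, haw, hmcc]; ring
  have htb : t b = Real.pi := by rw [htdef, hbw, hπcc]; ring
  have hua : u a = 0 := by rw [hudef, hta, hv0, mul_zero]
  have hub : u b = 0 := by rw [hudef, htb, hvπ, mul_zero]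
  refine ⟨hc, fun x hx => (hrange x hx).1, ?_, hua, hub⟩
  -- derivative of t and u at points with positive weight
  have hwz : ∀ z : ℝ, HasDerivAt (fun y => (2*ρ-1)*(y+x₀)) (2*ρ-1) z := by
    intro z; simpa using ((hasDerivAt_id z).add_const x₀).const_mul (2*ρ-1)
  have hderiv_t : ∀ z, 0 < (2*ρ-1)*(z+x₀) →
      HasDerivAt t (((2*ρ-1)*(z+x₀)) ^ (1/(2*ρ-1) - 1)) z := by
    intro z hz
    have hrp : HasDerivAt (fun y => ((2*ρ-1)*(y+x₀)) ^ (1/(2*ρ-1)))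
        ((1/(2*ρ-1)) * ((2*ρ-1)*(z+x₀)) ^ (1/(2*ρ-1) - 1) * (2*ρ-1)) z :=
      by have := (Real.hasDerivAt_rpow_const (x := (2*ρ-1)*(z+x₀)) (p := 1/(2*ρ-1)) (Or.inl hz.ne')).comp z (hwz z); exact this
    have h2 := hrp.const_add (-m)
    have ht' : t = fun y => -m + ((2*ρ-1)*(y+x₀)) ^ (1/(2*ρ-1)) := funext htdef
    rw [ht']
    refine h2.congr_deriv ?_
    field_simp
  have hderiv_u : ∀ z, 0 < (2*ρ-1)*(z+x₀) →
      HasDerivAt u (-ρ * ((2*ρ-1)*(z+x₀)) ^ (-ρ/(2*ρ-1) - 1) * v (t z)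
        + ((2*ρ-1)*(z+x₀)) ^ (-ρ/(2*ρ-1) + (1/(2*ρ-1) - 1)) * deriv v (t z)) z := by
    intro z hz
    have h3 : HasDerivAt (fun y => ((2*ρ-1)*(y+x₀)) ^ (-ρ/(2*ρ-1)))
        ((-ρ/(2*ρ-1)) * ((2*ρ-1)*(z+x₀)) ^ (-ρ/(2*ρ-1) - 1) * (2*ρ-1)) z :=
      by have := (Real.hasDerivAt_rpow_const (x := (2*ρ-1)*(z+x₀)) (p := -ρ/(2*ρ-1)) (Or.inl hz.ne')).comp z (hwz z); exact this
    have h4 : HasDerivAt (fun y => v (t y))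
        (deriv v (t z) * ((2*ρ-1)*(z+x₀)) ^ (1/(2*ρ-1) - 1)) z :=
      (hv (t z)).hasDerivAt.comp z (hderiv_t z hz)
    have h5 := h3.mul h4
    have hu' : u = fun y => ((2*ρ-1)*(y+x₀)) ^ (-ρ/(2*ρ-1)) * v (t y) := funext hudef
    rw [hu']
    refine h5.congr_deriv ?_
    rw [Real.rpow_add hz]
    have hk1 : -ρ/(2*ρ-1) * ((2*ρ-1)*(z+x₀)) ^ (-ρ/(2*ρ-1) - 1) * (2*ρ-1)
        = -ρ * ((2*ρ-1)*(z+x₀)) ^ (-ρ/(2*ρ-1) - 1) := by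
      rw [mul_right_comm, div_mul_cancel₀ _ hc]
    rw [hk1]
    ring
  -- main computation
  intro x hx
  obtain ⟨hw, ht0, htπ⟩ := hrange x hx
  have hev : ∀ᶠ z in nhds x, 0 < (2*ρ-1)*(z+x₀) := by
    have hopen : IsOpen {z : ℝ | 0 < (2*ρ-1)*(z+x₀)} :=
      isOpen_lt continuous_const (continuous_const.mul (continuous_id.add continuous_const))
    exact Filter.eventually_of_mem (hopen.mem_nhds hw) fun z hz => hz
  -- eventual equality with the rpow form
  have heqF : (fun z => (2*ρ-1)^2 * (z+x₀)^2 * deriv u z) =ᶠ[nhds x]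
      (fun z => -ρ * ((2*ρ-1)*(z+x₀)) ^ (1 - ρ/(2*ρ-1)) * v (t z)
        + ((2*ρ-1)*(z+x₀)) ^ (1 + (1-ρ)/(2*ρ-1)) * deriv v (t z)) := by
    filter_upwards [hev] with z hz
    rw [(hderiv_u z hz).deriv]
    have hsq : (2*ρ-1)^2 * (z+x₀)^2 = ((2*ρ-1)*(z+x₀)) ^ ((2:ℝ)) := by
      rw [show ((2:ℝ)) = ((2:ℕ):ℝ) by norm_num, Real.rpow_natCast]; ring
    have e1 : ((2*ρ-1)*(z+x₀))^((2:ℝ)) * ((2*ρ-1)*(z+x₀))^(-ρ/(2*ρ-1) - 1)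
        = ((2*ρ-1)*(z+x₀))^(1 - ρ/(2*ρ-1)) := by
      rw [← Real.rpow_add hz]; congr 1; ring
    have e2 : ((2*ρ-1)*(z+x₀))^((2:ℝ)) * ((2*ρ-1)*(z+x₀))^(-ρ/(2*ρ-1) + (1/(2*ρ-1) - 1))
        = ((2*ρ-1)*(z+x₀))^(1 + (1-ρ)/(2*ρ-1)) := by
      rw [← Real.rpow_add hz]; congr 1; ring
    rw [hsq]
    linear_combination (-ρ * v (t z)) * e1 + (deriv v (t z)) * e2
  -- derivative of the rpow form
  have h6 : HasDerivAt (fun z => ((2*ρ-1)*(z+x₀)) ^ (1 - ρ/(2*ρ-1)))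
      ((1 - ρ/(2*ρ-1)) * ((2*ρ-1)*(x+x₀)) ^ (1 - ρ/(2*ρ-1) - 1) * (2*ρ-1)) x :=
    by have := (Real.hasDerivAt_rpow_const (x := (2*ρ-1)*(x+x₀)) (p := 1 - ρ/(2*ρ-1)) (Or.inl hw.ne')).comp x (hwz x); exact this
  have h8 : HasDerivAt (fun z => ((2*ρ-1)*(z+x₀)) ^ (1 + (1-ρ)/(2*ρ-1)))
      ((1 + (1-ρ)/(2*ρ-1)) * ((2*ρ-1)*(x+x₀)) ^ (1 + (1-ρ)/(2*ρ-1) - 1) * (2*ρ-1)) x :=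
    by have := (Real.hasDerivAt_rpow_const (x := (2*ρ-1)*(x+x₀)) (p := 1 + (1-ρ)/(2*ρ-1)) (Or.inl hw.ne')).comp x (hwz x); exact this
  have h4x : HasDerivAt (fun y => v (t y))
      (deriv v (t x) * ((2*ρ-1)*(x+x₀)) ^ (1/(2*ρ-1) - 1)) x :=
    (hv (t x)).hasDerivAt.comp x (hderiv_t x hw)
  have h9 : HasDerivAt (fun y => deriv v (t y))
      (deriv (deriv v) (t x) * ((2*ρ-1)*(x+x₀)) ^ (1/(2*ρ-1) - 1)) x :=
    (hv' (t x)).hasDerivAt.comp x (hderiv_t x hw)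
  have hg2 := ((h6.const_mul (-ρ)).mul h4x).add (h8.mul h9)
  have hdF : deriv (fun z => (2*ρ-1)^2 * (z+x₀)^2 * deriv u z) x
      = (-ρ * ((1 - ρ/(2*ρ-1)) * ((2*ρ-1)*(x+x₀)) ^ (1 - ρ/(2*ρ-1) - 1) * (2*ρ-1))) * v (t x)
        + (-ρ * ((2*ρ-1)*(x+x₀)) ^ (1 - ρ/(2*ρ-1))) * (deriv v (t x) * ((2*ρ-1)*(x+x₀)) ^ (1/(2*ρ-1) - 1))
        + (((1 + (1-ρ)/(2*ρ-1)) * ((2*ρ-1)*(x+x₀)) ^ (1 + (1-ρ)/(2*ρ-1) - 1) * (2*ρ-1)) * deriv v (t x)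
          + ((2*ρ-1)*(x+x₀)) ^ (1 + (1-ρ)/(2*ρ-1)) * (deriv (deriv v) (t x) * ((2*ρ-1)*(x+x₀)) ^ (1/(2*ρ-1) - 1))) := by
    rw [heqF.deriv_eq]; exact hg2.deriv
  -- the ODE in transformed form
  have htm : t x + m = ((2*ρ-1)*(x+x₀)) ^ (1/(2*ρ-1)) := by rw [htdef]; ring
  have hP : 0 < ((2*ρ-1)*(x+x₀)) ^ (2/(2*ρ-1)) := Real.rpow_pos_of_pos hw _
  have htm2 : (t x + m)^2 = ((2*ρ-1)*(x+x₀)) ^ (2/(2*ρ-1)) := by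
    rw [htm, ← Real.rpow_natCast (((2*ρ-1)*(x+x₀)) ^ (1/(2*ρ-1))) 2,
      ← Real.rpow_mul hw.le]
    congr 1
    push_cast
    ring
  have hODE3 : ((2*ρ-1)*(x+x₀)) ^ (2/(2*ρ-1)) * deriv (deriv v) (t x)
      = k * v (t x) - lam * ((2*ρ-1)*(x+x₀)) ^ (2/(2*ρ-1)) * v (t x) := by
    have h := heq (t x) ⟨ht0, htπ⟩
    rw [htm2] at h
    have : deriv (deriv v) (t x)
        = k / ((2*ρ-1)*(x+x₀)) ^ (2/(2*ρ-1)) * v (t x) - lam * v (t x) := by linarith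
    rw [this]
    field_simp
  -- exponent bookkeeping
  have r1 : ((2*ρ-1)*(x+x₀)) ^ (1 - ρ/(2*ρ-1) - 1) = ((2*ρ-1)*(x+x₀)) ^ (-ρ/(2*ρ-1)) := by
    congr 1; ring
  have r2 : ((2*ρ-1)*(x+x₀)) ^ (1 + (1-ρ)/(2*ρ-1) - 1) = ((2*ρ-1)*(x+x₀)) ^ ((1-ρ)/(2*ρ-1)) := by
    congr 1; ring
  have r3 : ((2*ρ-1)*(x+x₀)) ^ (1 - ρ/(2*ρ-1)) * ((2*ρ-1)*(x+x₀)) ^ (1/(2*ρ-1) - 1)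
      = ((2*ρ-1)*(x+x₀)) ^ ((1-ρ)/(2*ρ-1)) := by
    rw [← Real.rpow_add hw]; congr 1; ring
  have r4 : ((2*ρ-1)*(x+x₀)) ^ (1 + (1-ρ)/(2*ρ-1)) * ((2*ρ-1)*(x+x₀)) ^ (1/(2*ρ-1) - 1)
      = ((2*ρ-1)*(x+x₀)) ^ (2/(2*ρ-1)) * ((2*ρ-1)*(x+x₀)) ^ (-ρ/(2*ρ-1)) := by
    rw [← Real.rpow_add hw, ← Real.rpow_add hw]; congr 1; ring
  have hco1 : (1 - ρ/(2*ρ-1)) * (2*ρ-1) = (2*ρ-1) - ρ := by rw [sub_mul, div_mul_cancel₀ _ hc]; ring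
  have hco2 : (1 + (1-ρ)/(2*ρ-1)) * (2*ρ-1) = ρ := by rw [add_mul, div_mul_cancel₀ _ hc]; ring
  rw [hdF, hudef x, r1, r2]
  set A := ((2*ρ-1)*(x+x₀)) ^ (-ρ/(2*ρ-1)) with hA
  set B := ((2*ρ-1)*(x+x₀)) ^ ((1-ρ)/(2*ρ-1)) with hB
  set E := ((2*ρ-1)*(x+x₀)) ^ (1 - ρ/(2*ρ-1)) with hE
  set C := ((2*ρ-1)*(x+x₀)) ^ (1 + (1-ρ)/(2*ρ-1)) with hC
  set D := ((2*ρ-1)*(x+x₀)) ^ (1/(2*ρ-1) - 1) with hD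
  set P := ((2*ρ-1)*(x+x₀)) ^ (2/(2*ρ-1)) with hPd
  set V := v (t x) with hV
  set V' := deriv v (t x) with hV'
  set V'' := deriv (deriv v) (t x) with hV''
  linear_combination (ρ*V') * r3 + (-V'') * r4 + (-A) * hODE3
    + (ρ*A*V) * hco1 + (-B*V') * hco2 + (A*V) * hρ
end

section
/- Let C₁ > 0, k > 0, m > 0, x₀ ∈ ℝ, λ ∈ ℝ. Set a = −x₀ + 2√(m/C₁) and b = −x₀ + 2√((π+m)/C₁), and define t(x) = C₁(x+x₀)²/4 − m. Suppose v : ℝ → ℝ is twice differentiable and satisfies −v''(t) + (k/(t+m)²)·v(t) = λ·v(t) for all t ∈ (0,π), with v(0) = 0 = v(π). Then u(x) = (C₁(x+x₀)/2)^(−2)·v(t(x)) satisfies −(d/dx)((1/8)·C₁³·(x+x₀)³·u'(x)) + (k/2)·C₁³·(x+x₀)·u(x) = λ·(C₁(x+x₀)/2)⁵·u(x) for all x ∈ (a,b), and u(a) = 0 = u(b). -/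
set_option maxHeartbeats 1000000


/-- reciprocal-linear transformation function
`w(t) = 1/(C₁·m + C₁·t)`: the second PdHA problem transforms exactly to
`−((1/8)C₁³(x+x₀)³·u')' + (k/2)C₁³(x+x₀)·u = λ·(C₁(x+x₀)/2)⁵·u`
with Dirichlet boundary conditions. -/
theorem stmt19 (C₁ k m x₀ lam : ℝ) (hC : 0 < C₁) (hk : 0 < k) (hm : 0 < m)
    (a b : ℝ)
    (ha : a = -x₀ + 2 * Real.sqrt (m / C₁))
    (hb : b = -x₀ + 2 * Real.sqrt ((Real.pi + m) / C₁))
    (t : ℝ → ℝ) (htdef : ∀ x, t x = C₁ * (x + x₀) ^ 2 / 4 - m)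
    (v : ℝ → ℝ)
    (hv : ∀ s, DifferentiableAt ℝ v s) (hv' : ∀ s, DifferentiableAt ℝ (deriv v) s)
    (heq : ∀ s ∈ Set.Ioo 0 Real.pi,
      -deriv (deriv v) s + (k / (s + m) ^ 2) * v s = lam * v s)
    (hv0 : v 0 = 0) (hvπ : v Real.pi = 0)
    (u : ℝ → ℝ)
    (hudef : ∀ x, u x = (C₁ * (x + x₀) / 2) ^ (-2 : ℤ) * v (t x)) :
    (∀ x ∈ Set.Ioo a b,
      -deriv (fun z => (1 / 8) * C₁ ^ 3 * (z + x₀) ^ 3 * deriv u z) x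
          + (k / 2) * C₁ ^ 3 * (x + x₀) * u x
        = lam * (C₁ * (x + x₀) / 2) ^ 5 * u x) ∧
    u a = 0 ∧ u b = 0 := by
  have hC' : C₁ ≠ 0 := ne_of_gt hC
  -- rewrite u explicitly
  have hu : ∀ z, u z = ((C₁ * (z + x₀) / 2) ^ 2)⁻¹ * v (C₁ * (z + x₀) ^ 2 / 4 - m) := by
    intro z
    rw [hudef, htdef]
    congr 1
  -- derivative of the inner substitution
  have ht : ∀ z : ℝ, HasDerivAt (fun w => C₁ * (w + x₀) ^ 2 / 4 - m) (C₁ * (z + x₀) / 2) z := by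
    intro z
    have h := (((((hasDerivAt_id z).add_const x₀).pow 2).const_mul C₁).div_const 4).sub_const m
    refine h.congr_deriv ?_
    simp only [id_eq]
    ring
  set G : ℝ → ℝ := fun z => -(8 / (C₁ ^ 2 * (z + x₀) ^ 3)) * v (C₁ * (z + x₀) ^ 2 / 4 - m)
      + (2 / (C₁ * (z + x₀))) * deriv v (C₁ * (z + x₀) ^ 2 / 4 - m) with hGdef
  have hG : ∀ z, z + x₀ ≠ 0 → HasDerivAt u (G z) z := by
    intro z hz
    have hfin : HasDerivAt (fun w => C₁ * (w + x₀) / 2) (C₁ / 2) z := by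
      have h := (((hasDerivAt_id z).add_const x₀).const_mul C₁).div_const 2
      refine h.congr_deriv ?_
      simp
    have hq : HasDerivAt (fun w => (C₁ * (w + x₀) / 2) ^ 2)
        (2 * (C₁ * (z + x₀) / 2) * (C₁ / 2)) z := by
      have h := hfin.pow 2
      refine h.congr_deriv ?_
      ring
    have hne0 : C₁ * (z + x₀) / 2 ≠ 0 := div_ne_zero (mul_ne_zero hC' hz) two_ne_zero
    have hne : (C₁ * (z + x₀) / 2) ^ 2 ≠ 0 := pow_ne_zero 2 hne0
    have hinv := hq.inv hne
    have hvt : HasDerivAt (fun w => v (C₁ * (w + x₀) ^ 2 / 4 - m))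
        (deriv v (C₁ * (z + x₀) ^ 2 / 4 - m) * (C₁ * (z + x₀) / 2)) z :=
      (hv _).hasDerivAt.comp z (ht z)
    have hmul := hinv.mul hvt
    have hufun : u = fun w => ((C₁ * (w + x₀) / 2) ^ 2)⁻¹ * v (C₁ * (w + x₀) ^ 2 / 4 - m) :=
      funext hu
    rw [hufun, hGdef]
    refine hmul.congr_deriv ?_
    simp only [Pi.inv_apply]
    field_simp
    ring
  refine ⟨?_, ?_, ?_⟩
  · intro x hx
    have hy : 0 < x + x₀ := by
      have h1 := hx.1
      rw [ha] at h1
      have : 0 < Real.sqrt (m / C₁) := Real.sqrt_pos.mpr (div_pos hm hC)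
      linarith
    have hy' : x + x₀ ≠ 0 := ne_of_gt hy
    -- τ is in (0, π)
    have hsq1 : (2 * Real.sqrt (m / C₁)) ^ 2 = 4 * (m / C₁) := by
      have h := Real.sq_sqrt (show (0:ℝ) ≤ m / C₁ by positivity)
      linear_combination 4 * h
    have hsq2 : (2 * Real.sqrt ((Real.pi + m) / C₁)) ^ 2 = 4 * ((Real.pi + m) / C₁) := by
      have h := Real.sq_sqrt (show (0:ℝ) ≤ (Real.pi + m) / C₁ by positivity)
      linear_combination 4 * h
    have h1 : 2 * Real.sqrt (m / C₁) < x + x₀ := by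
      have := hx.1; rw [ha] at this; linarith
    have h2 : x + x₀ < 2 * Real.sqrt ((Real.pi + m) / C₁) := by
      have := hx.2; rw [hb] at this; linarith
    have hs0 : 0 ≤ 2 * Real.sqrt (m / C₁) := by positivity
    have hlo : 4 * (m / C₁) < (x + x₀) ^ 2 := by nlinarith
    have hhi : (x + x₀) ^ 2 < 4 * ((Real.pi + m) / C₁) := by nlinarith
    have hτ0 : 0 < C₁ * (x + x₀) ^ 2 / 4 - m := by
      have := mul_lt_mul_of_pos_left hlo hC
      have h4 : C₁ * (4 * (m / C₁)) = 4 * m := by field_simp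
      nlinarith
    have hτπ : C₁ * (x + x₀) ^ 2 / 4 - m < Real.pi := by
      have := mul_lt_mul_of_pos_left hhi hC
      have h4 : C₁ * (4 * ((Real.pi + m) / C₁)) = 4 * (Real.pi + m) := by field_simp
      nlinarith
    -- replace deriv u by G near x
    have hev : (fun z => (1 / 8) * C₁ ^ 3 * (z + x₀) ^ 3 * deriv u z)
        =ᶠ[nhds x] (fun z => (1 / 8) * C₁ ^ 3 * (z + x₀) ^ 3 * G z) := by
      have hcont : ContinuousAt (fun z : ℝ => z + x₀) x :=
        (continuous_id.add continuous_const).continuousAt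
      have hevpos : ∀ᶠ z in nhds x, 0 < z + x₀ := hcont.eventually (eventually_gt_nhds hy)
      filter_upwards [hevpos] with z hz
      rw [(hG z (ne_of_gt hz)).deriv]
    rw [hev.deriv_eq]
    -- now compute the derivative of the explicit function
    have hc : HasDerivAt (fun z : ℝ => (1 / 8) * C₁ ^ 3 * (z + x₀) ^ 3)
        ((1 / 8) * C₁ ^ 3 * (3 * (x + x₀) ^ 2)) x := by
      have h := (((hasDerivAt_id x).add_const x₀).pow 3).const_mul ((1 / 8) * C₁ ^ 3)
      refine h.congr_deriv ?_
      simp only [id_eq]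
      ring
    have hden1 : HasDerivAt (fun z : ℝ => C₁ ^ 2 * (z + x₀) ^ 3) (C₁ ^ 2 * (3 * (x + x₀) ^ 2)) x := by
      have h := (((hasDerivAt_id x).add_const x₀).pow 3).const_mul (C₁ ^ 2)
      refine h.congr_deriv ?_
      simp only [id_eq]
      ring
    have hden1ne : C₁ ^ 2 * (x + x₀) ^ 3 ≠ 0 :=
      mul_ne_zero (pow_ne_zero 2 hC') (pow_ne_zero 3 hy')
    have hA : HasDerivAt (fun z : ℝ => 8 / (C₁ ^ 2 * (z + x₀) ^ 3))
        ((0 * (C₁ ^ 2 * (x + x₀) ^ 3) - 8 * (C₁ ^ 2 * (3 * (x + x₀) ^ 2))) /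
          (C₁ ^ 2 * (x + x₀) ^ 3) ^ 2) x :=
      (hasDerivAt_const x 8).div hden1 hden1ne
    have hden2 : HasDerivAt (fun z : ℝ => C₁ * (z + x₀)) C₁ x := by
      have h := ((hasDerivAt_id x).add_const x₀).const_mul C₁
      refine h.congr_deriv ?_
      ring
    have hden2ne : C₁ * (x + x₀) ≠ 0 := mul_ne_zero hC' hy'
    have hB : HasDerivAt (fun z : ℝ => 2 / (C₁ * (z + x₀)))
        ((0 * (C₁ * (x + x₀)) - 2 * C₁) / (C₁ * (x + x₀)) ^ 2) x :=
      (hasDerivAt_const x 2).div hden2 hden2ne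
    have hvt : HasDerivAt (fun w => v (C₁ * (w + x₀) ^ 2 / 4 - m))
        (deriv v (C₁ * (x + x₀) ^ 2 / 4 - m) * (C₁ * (x + x₀) / 2)) x :=
      (hv _).hasDerivAt.comp x (ht x)
    have hdvt : HasDerivAt (fun w => deriv v (C₁ * (w + x₀) ^ 2 / 4 - m))
        (deriv (deriv v) (C₁ * (x + x₀) ^ 2 / 4 - m) * (C₁ * (x + x₀) / 2)) x :=
      (hv' _).hasDerivAt.comp x (ht x)
    have hGd : HasDerivAt G
        (-((0 * (C₁ ^ 2 * (x + x₀) ^ 3) - 8 * (C₁ ^ 2 * (3 * (x + x₀) ^ 2))) /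
            (C₁ ^ 2 * (x + x₀) ^ 3) ^ 2) * v (C₁ * (x + x₀) ^ 2 / 4 - m)
          + -(8 / (C₁ ^ 2 * (x + x₀) ^ 3)) *
              (deriv v (C₁ * (x + x₀) ^ 2 / 4 - m) * (C₁ * (x + x₀) / 2))
          + (((0 * (C₁ * (x + x₀)) - 2 * C₁) / (C₁ * (x + x₀)) ^ 2) *
                deriv v (C₁ * (x + x₀) ^ 2 / 4 - m)
              + (2 / (C₁ * (x + x₀))) *
                (deriv (deriv v) (C₁ * (x + x₀) ^ 2 / 4 - m) * (C₁ * (x + x₀) / 2)))) x := by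
      rw [hGdef]
      exact ((hA.neg.mul hvt).add (hB.mul hdvt))
    have hP := hc.mul hGd
    rw [show (fun z => 1 / 8 * C₁ ^ 3 * (z + x₀) ^ 3 * G z) = (fun z => 1 / 8 * C₁ ^ 3 * (z + x₀) ^ 3) * G from rfl, hP.deriv]
    -- algebraic endgame
    have hττ : (C₁ * (x + x₀) ^ 2 / 4 - m) + m = C₁ * (x + x₀) ^ 2 / 4 := by ring
    have hvv : deriv (deriv v) (C₁ * (x + x₀) ^ 2 / 4 - m)
        = k / (C₁ * (x + x₀) ^ 2 / 4) ^ 2 * v (C₁ * (x + x₀) ^ 2 / 4 - m)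
          - lam * v (C₁ * (x + x₀) ^ 2 / 4 - m) := by
      have h := heq _ ⟨hτ0, hτπ⟩
      rw [hττ] at h
      linarith
    rw [hu x]
    simp only [hGdef]
    rw [hvv]
    generalize hgen : x + x₀ = y
    have hyne : y ≠ 0 := hgen ▸ hy'
    generalize v (C₁ * y ^ 2 / 4 - m) = V
    generalize deriv v (C₁ * y ^ 2 / 4 - m) = DV
    field_simp
    ring
  · have hsq : (a + x₀) ^ 2 = 4 * (m / C₁) := by
      have h := Real.sq_sqrt (show (0:ℝ) ≤ m / C₁ by positivity)
      rw [ha]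
      linear_combination 4 * h
    have h0 : C₁ * (a + x₀) ^ 2 / 4 - m = 0 := by
      rw [hsq]; field_simp; ring
    rw [hu a, h0, hv0, mul_zero]
  · have hsq : (b + x₀) ^ 2 = 4 * ((Real.pi + m) / C₁) := by
      have h := Real.sq_sqrt (show (0:ℝ) ≤ (Real.pi + m) / C₁ by positivity)
      rw [hb]
      linear_combination 4 * h
    have h0 : C₁ * (b + x₀) ^ 2 / 4 - m = Real.pi := by
      rw [hsq]; field_simp; ring
    rw [hu b, h0, hvπ, mul_zero]
end
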